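/- arXiv:2511.12272 — 8 statements merged into one kernel-verified Lean document; each statement's English description precedes it below -/
import Mathlib

section
/- Let X be a complex Hilbert space and let T be an invertible bounded linear operator on X. Then T has the shadowing property if and only if the right spectrum of T is disjoint from the unit circle in the complex plane, i.e., σ_r(T) ∩ 𝕋 = ∅. -/
open Filter Topology

noncomputable section

variable {X : Type*} [NormedAddCommGroup X] [InnerProductSpace ℂ X] [CompleteSpace X]

/-- `T` has the shadowing property: for every `ε > 0` there is `δ > 0` such that every
`δ`-pseudotrajectory of `T` is `ε`-shadowed by a real trajectory of `T`. -/
def ShadowingProperty {Y : Type*} [NormedAddCommGroup Y] [NormedSpace ℂ Y]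
    (T : (Y →L[ℂ] Y)ˣ) : Prop :=
  ∀ ε > (0 : ℝ), ∃ δ > (0 : ℝ), ∀ x : ℤ → Y,
    (∀ n : ℤ, ‖x (n + 1) - (T : Y →L[ℂ] Y) (x n)‖ ≤ δ) →
      ∃ y : Y, ∀ n : ℤ, ‖x n - ((T ^ n : (Y →L[ℂ] Y)ˣ) : Y →L[ℂ] Y) y‖ ≤ ε

/-- The right spectrum of `T`: the set of `λ ∈ ℂ` such that `λI - T` has no bounded
linear right inverse. -/
def RightSpectrum {Y : Type*} [NormedAddCommGroup Y] [NormedSpace ℂ Y]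
    (T : Y →L[ℂ] Y) : Set ℂ :=
  {l : ℂ | ¬ ∃ S : Y →L[ℂ] Y, (l • (1 : Y →L[ℂ] Y) - T) * S = 1}

open Complex ContinuousLinearMap

set_option maxHeartbeats 1000000

local notation "⟪" x ", " y "⟫" => @inner ℂ _ _ x y

/-- A self-adjoint bounded-below operator on a Hilbert space is invertible. -/
lemma isUnit_of_selfAdjoint_of_boundedBelow (G : X →L[ℂ] X) (hsa : adjoint G = G)
    {c : ℝ} (hc : 0 < c) (hb : ∀ x, c * ‖x‖ ≤ ‖G x‖) : IsUnit G := by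
  have hinj : Function.Injective G := by
    intro x y hxy
    have h0 : G (x - y) = 0 := by rw [map_sub, hxy, sub_self]
    have hbb := hb (x - y)
    rw [h0, norm_zero] at hbb
    have hxy0 : ‖x - y‖ ≤ 0 := by nlinarith [norm_nonneg (x - y)]
    have : x - y = 0 := by simpa [norm_le_zero_iff] using hxy0
    exact sub_eq_zero.mp this
  have hker : LinearMap.ker (G : X →ₗ[ℂ] X) = ⊥ := by
    rw [LinearMap.ker_eq_bot']
    intro x hx
    have := hinj (a₁ := x) (a₂ := 0) (by simpa using hx)
    simpa using this
  have hanti : AntilipschitzWith (⟨c, hc.le⟩ : NNReal)⁻¹ G := by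
    apply ContinuousLinearMap.antilipschitz_of_bound
    intro x
    have h := hb x
    rw [show (((⟨c, hc.le⟩ : NNReal)⁻¹ : NNReal) : ℝ) = (((⟨c, hc.le⟩ : NNReal) : ℝ))⁻¹ from
      NNReal.coe_inv _]
    simp only [NNReal.coe_mk]
    rw [le_inv_mul_iff₀ hc]
    exact h
  have hclosed : IsClosed (Set.range G) := hanti.isClosed_range G.uniformContinuous
  have hrangeclosed : IsClosed ((LinearMap.range (G : X →ₗ[ℂ] X) : Submodule ℂ X) : Set X) := by
    have : ((LinearMap.range (G : X →ₗ[ℂ] X) : Submodule ℂ X) : Set X) = Set.range G := by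
      ext x; simp [LinearMap.mem_range, Set.mem_range]
    rw [this]; exact hclosed
  haveI : CompleteSpace (LinearMap.range (G : X →ₗ[ℂ] X) : Submodule ℂ X) :=
    hrangeclosed.completeSpace_coe
  have hrange : LinearMap.range (G : X →ₗ[ℂ] X) = ⊤ := by
    rw [← Submodule.orthogonal_eq_bot_iff]
    rw [Submodule.eq_bot_iff]
    intro u hu
    rw [Submodule.mem_orthogonal] at hu
    have hGu : G u = 0 := by
      have h2 : ⟪G (G u), u⟫ = 0 := hu (G (G u)) (LinearMap.mem_range_self _ _)
      have h3 : ⟪G u, G u⟫ = 0 := by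
        calc ⟪G u, G u⟫ = ⟪G u, adjoint G u⟫ := by rw [hsa]
        _ = ⟪G (G u), u⟫ := by rw [ContinuousLinearMap.adjoint_inner_right]
        _ = 0 := h2
      exact inner_self_eq_zero.mp h3
    have : u = 0 := hinj (by simpa using hGu)
    exact this
  rw [ContinuousLinearMap.isUnit_iff_bijective]
  exact ⟨hinj, LinearMap.range_eq_top.mp hrange⟩

/-- If the adjoint of `A` is bounded below, then `A` has a right inverse. -/
lemma exists_rightInverse_of_adjoint_boundedBelow (A : X →L[ℂ] X) {c : ℝ} (hc : 0 < c)
    (hb : ∀ x, c * ‖x‖ ≤ ‖adjoint A x‖) : ∃ S : X →L[ℂ] X, A * S = 1 := by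
  set G : X →L[ℂ] X := A * adjoint A with hG
  have hsa : adjoint G = G := by
    rw [hG]
    have h1 : A * adjoint A = A.comp (adjoint A) := rfl
    rw [h1, ContinuousLinearMap.adjoint_comp, ContinuousLinearMap.adjoint_adjoint]
  have hGb : ∀ x, (c * c) * ‖x‖ ≤ ‖G x‖ := by
    intro x
    rcases eq_or_ne x 0 with rfl | hx
    · simp
    have h1 : (⟪adjoint A x, adjoint A x⟫ : ℂ) = ⟪x, G x⟫ := by
      rw [ContinuousLinearMap.adjoint_inner_left]
      rfl
    have h2 : (‖adjoint A x‖ : ℝ) ^ 2 = ‖(⟪x, G x⟫ : ℂ)‖ := by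
      rw [← h1, inner_self_eq_norm_sq_to_K]
      rw [norm_pow]
      simp
    have h3 : ‖(⟪x, G x⟫ : ℂ)‖ ≤ ‖x‖ * ‖G x‖ := norm_inner_le_norm x (G x)
    have h4 : (c * ‖x‖) ^ 2 ≤ ‖adjoint A x‖ ^ 2 := by
      have := hb x
      have hn : 0 ≤ c * ‖x‖ := by positivity
      nlinarith
    have hxpos : 0 < ‖x‖ := norm_pos_iff.mpr hx
    nlinarith
  obtain ⟨u, hu⟩ := isUnit_of_selfAdjoint_of_boundedBelow G hsa (by positivity : (0:ℝ) < c * c) hGb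
  refine ⟨adjoint A * ↑u⁻¹, ?_⟩
  have h5 : A * (adjoint A * ↑u⁻¹) = G * ↑u⁻¹ := by rw [hG, mul_assoc]
  rw [h5, ← hu, Units.mul_inv]

/-- Conversely, a right inverse bounds the adjoint below. -/
lemma adjoint_boundedBelow_of_rightInverse {A S : X →L[ℂ] X} (h : A * S = 1) :
    ∀ x, (‖S‖ + 1)⁻¹ * ‖x‖ ≤ ‖adjoint A x‖ := by
  intro x
  have hadj : adjoint S * adjoint A = 1 := by
    have h1 : A * S = A.comp S := rfl
    have := congrArg ContinuousLinearMap.adjoint (h1 ▸ h)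
    rw [ContinuousLinearMap.adjoint_comp] at this
    rw [show (1 : X →L[ℂ] X) = ContinuousLinearMap.id ℂ X from rfl,
      ContinuousLinearMap.adjoint_id] at this
    exact this
  have h2 : adjoint S (adjoint A x) = x := by
    have := congrFun (congrArg DFunLike.coe hadj) x
    simpa [ContinuousLinearMap.mul_apply] using this
  have h3 : ‖x‖ ≤ ‖adjoint S‖ * ‖adjoint A x‖ := by
    conv_lhs => rw [← h2]
    exact (adjoint S).le_opNorm _
  have h4 : ‖adjoint S‖ = ‖S‖ := ContinuousLinearMap.adjoint.norm_map S
  have h5 : ‖x‖ ≤ (‖S‖ + 1) * ‖adjoint A x‖ := by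
    rw [h4] at h3
    nlinarith [norm_nonneg (adjoint A x), norm_nonneg x]
  have hS1 : (0:ℝ) < ‖S‖ + 1 := by positivity
  rw [inv_mul_le_iff₀ hS1]
  linarith

/-- Discrete antiderivative over `ℤ`. -/
lemma exists_discrete_antideriv {Y : Type*} [AddCommGroup Y] (h : ℤ → Y) :
    ∃ g : ℤ → Y, ∀ n : ℤ, g (n + 1) - g n = h n := by
  refine ⟨fun n => if 0 ≤ n then ∑ k ∈ Finset.range n.toNat, h k
    else -∑ k ∈ Finset.range (-n).toNat, h (-1 - k), fun n => ?_⟩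
  rcases le_or_gt 0 n with hn | hn
  · have hn1 : (0:ℤ) ≤ n + 1 := by omega
    simp only [hn, hn1, if_true]
    have ht : (n + 1).toNat = n.toNat + 1 := by omega
    rw [ht, Finset.sum_range_succ]
    have : ((n.toNat : ℤ)) = n := by omega
    rw [this]
    abel
  · rcases eq_or_lt_of_le (by omega : n + 1 ≤ 0) with hn1 | hn1
    · -- n = -1
      have hne : n = -1 := by omega
      subst hne
      norm_num
    · have hnn : ¬ (0:ℤ) ≤ n := by omega
      have hnn1 : ¬ (0:ℤ) ≤ n + 1 := by omega
      simp only [hnn, hnn1, if_false]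
      have ht : (-n).toNat = (-(n+1)).toNat + 1 := by omega
      rw [ht, Finset.sum_range_succ]
      have : (-1 - ((-(n+1)).toNat : ℤ)) = n := by omega
      rw [this]
      abel

/-- Shadowing implies the adjoint of `l•1 - T` is bounded below, for `l` on the circle. -/
lemma adjoint_bddBelow_of_shadowing (T : (X →L[ℂ] X)ˣ) (hSh : ShadowingProperty T)
    {l : ℂ} (hl : ‖l‖ = 1) :
    ∃ δ > (0:ℝ), ∀ φ : X,
      δ * ‖φ‖ ≤ ‖adjoint (l • (1 : X →L[ℂ] X) - (T : X →L[ℂ] X)) φ‖ := by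
  obtain ⟨δ, hδ, hsh⟩ := hSh 1 one_pos
  have hl0 : l ≠ 0 := by
    intro h; rw [h, norm_zero] at hl; norm_num at hl
  set A : X →L[ℂ] X := l • (1 : X →L[ℂ] X) - (T : X →L[ℂ] X) with hA
  set As : X →L[ℂ] X := adjoint A with hAs
  -- adjoint of T in terms of As
  have hadjT : adjoint (T : X →L[ℂ] X) = (starRingEnd ℂ l) • (1 : X →L[ℂ] X) - As := by
    rw [hAs, hA, map_sub, map_smulₛₗ]
    rw [show (1 : X →L[ℂ] X) = ContinuousLinearMap.id ℂ X from rfl,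
      ContinuousLinearMap.adjoint_id]
    abel
  refine ⟨δ, hδ, ?_⟩
  -- main claim for unit vectors
  have main : ∀ φ : X, ‖φ‖ = 1 → δ ≤ ‖As φ‖ := by
    intro φ hφ
    set z : ℤ → X := fun n => ((l ^ (n+1)) * (δ:ℂ)) • φ with hz
    have hznorm : ∀ n : ℤ, ‖z n‖ = δ := by
      intro n
      rw [hz]
      simp only [norm_smul, norm_mul, norm_zpow, hl, one_zpow, Complex.norm_real, hφ,
        Real.norm_eq_abs, abs_of_pos hδ]
      ring
    obtain ⟨g, hg⟩ := exists_discrete_antideriv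
      (fun n => ((T ^ (-(n+1)) : (X →L[ℂ] X)ˣ) : X →L[ℂ] X) (z n))
    set x : ℤ → X := fun n => ((T ^ n : (X →L[ℂ] X)ˣ) : X →L[ℂ] X) (g n) with hx
    have hTpow : ∀ n : ℤ, ∀ v : X,
        (T : X →L[ℂ] X) (((T ^ n : (X →L[ℂ] X)ˣ) : X →L[ℂ] X) v)
          = ((T ^ (n+1) : (X →L[ℂ] X)ˣ) : X →L[ℂ] X) v := by
      intro n v
      have : (T^(n+1) : (X →L[ℂ] X)ˣ) = T * T^n := by
        rw [← zpow_one_add T n]; ring_nf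
      rw [this, Units.val_mul, ContinuousLinearMap.mul_apply]
    have herr : ∀ n : ℤ, x (n+1) - (T : X →L[ℂ] X) (x n) = z n := by
      intro n
      rw [hx]
      simp only
      rw [hTpow n (g n), ← map_sub, hg n]
      have : ((T ^ (n+1) : (X →L[ℂ] X)ˣ) : X →L[ℂ] X)
          (((T ^ (-(n+1)) : (X →L[ℂ] X)ˣ) : X →L[ℂ] X) (z n))
          = (((T ^ (n+1) * T ^ (-(n+1)) : (X →L[ℂ] X)ˣ)) : X →L[ℂ] X) (z n) := by
        rw [Units.val_mul, ContinuousLinearMap.mul_apply]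
      have h0 : (T ^ (n+1) * T ^ (-(n+1)) : (X →L[ℂ] X)ˣ) = 1 := by
        rw [← zpow_add T]
        have he : n + 1 + -(n + 1) = 0 := by ring
        rw [he, zpow_zero]
      rw [this, h0]
      simp
    obtain ⟨y, hy⟩ := hsh x (fun n => by rw [herr n, hznorm n])
    set w : ℤ → X := fun n => x n - ((T ^ n : (X →L[ℂ] X)ˣ) : X →L[ℂ] X) y with hw
    have hwb : ∀ n : ℤ, ‖w n‖ ≤ 1 := hy
    have hrecw : ∀ n : ℤ, w (n+1) - (T : X →L[ℂ] X) (w n) = z n := by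
      intro n
      have h1 : w (n+1) = x (n+1) - ((T ^ (n+1) : (X →L[ℂ] X)ˣ) : X →L[ℂ] X) y := rfl
      have h2 : w n = x n - ((T ^ n : (X →L[ℂ] X)ˣ) : X →L[ℂ] X) y := rfl
      rw [h1, h2, map_sub, hTpow n y]
      rw [sub_sub_sub_comm, herr n, sub_self, sub_zero]
    -- telescoping
    set a : ℤ → ℂ := fun n => l ^ (-n) * ⟪φ, w n⟫ with ha
    have habs : ∀ n : ℤ, ‖a n‖ ≤ 1 := by
      intro n
      rw [ha]
      simp only [norm_mul, norm_zpow, hl, one_zpow, one_mul]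
      calc ‖⟪φ, w n⟫‖ ≤ ‖φ‖ * ‖w n‖ := norm_inner_le_norm _ _
      _ ≤ 1 := by rw [hφ, one_mul]; exact hwb n
    have key : ∀ n : ℤ, δ - ‖As φ‖ ≤ (a (n+1)).re - (a n).re := by
      intro n
      have e1 : ⟪φ, w (n+1) - (T : X →L[ℂ] X) (w n)⟫ = ⟪φ, z n⟫ := by rw [hrecw n]
      have e2 : ⟪φ, z n⟫ = l ^ (n+1) * (δ:ℂ) := by
        rw [hz]
        simp only
        rw [inner_smul_right, inner_self_eq_norm_sq_to_K, hφ]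
        norm_num
      have e3 : ⟪φ, (T : X →L[ℂ] X) (w n)⟫ = l * ⟪φ, w n⟫ - ⟪As φ, w n⟫ := by
        rw [← ContinuousLinearMap.adjoint_inner_left]
        rw [hadjT]
        rw [ContinuousLinearMap.sub_apply, ContinuousLinearMap.smul_apply,
          ContinuousLinearMap.one_apply]
        rw [inner_sub_left, inner_smul_left]
        simp
      have e4 : ⟪φ, w (n+1)⟫ = l ^ (n+1) * (δ:ℂ) + l * ⟪φ, w n⟫ - ⟪As φ, w n⟫ := by
        rw [inner_sub_right] at e1
        rw [e3] at e1
        rw [e2] at e1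
        linear_combination e1
      have hz1 : l ^ (-(n+1)) * l ^ (n+1) = 1 := by
        rw [← zpow_add₀ hl0]
        have he : -(n+1) + (n+1) = 0 := by ring
        rw [he, zpow_zero]
      have hz2 : l ^ (-(n+1)) * l = l ^ (-n) := by
        have he : -n = -(n+1) + 1 := by ring
        rw [he, zpow_add₀ hl0, zpow_one]
      have hstep : a (n+1) = (δ:ℂ) + a n - l ^ (-(n+1)) * ⟪As φ, w n⟫ := by
        have : a (n+1) = l ^ (-(n+1)) * ⟪φ, w (n+1)⟫ := rfl
        rw [this, e4, ha]
        simp only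
        linear_combination (δ:ℂ) * hz1 + ⟪φ, w n⟫ * hz2
      have hterm : ‖l ^ (-(n+1)) * ⟪As φ, w n⟫‖ ≤ ‖As φ‖ := by
        rw [norm_mul, norm_zpow, hl, one_zpow, one_mul]
        calc ‖⟪As φ, w n⟫‖ ≤ ‖As φ‖ * ‖w n‖ := norm_inner_le_norm _ _
        _ ≤ ‖As φ‖ * 1 := by
            exact mul_le_mul_of_nonneg_left (hwb n) (norm_nonneg _)
        _ = ‖As φ‖ := mul_one _
      have hre := congrArg Complex.re hstep
      rw [Complex.sub_re, Complex.add_re, Complex.ofReal_re] at hre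
      have habs2 : |(l ^ (-(n+1)) * ⟪As φ, w n⟫).re| ≤ ‖As φ‖ :=
        le_trans (Complex.abs_re_le_norm _) hterm
      have := abs_le.mp habs2
      linarith
    have growth : ∀ N : ℕ, (N : ℝ) * (δ - ‖As φ‖) ≤ (a N).re - (a 0).re := by
      intro N
      induction N with
      | zero => simp
      | succ N ih =>
        have hk := key (N : ℤ)
        push_cast
        nlinarith [hk, ih]
    by_contra hcon
    push_neg at hcon
    set d : ℝ := δ - ‖As φ‖ with hd
    have hdpos : 0 < d := by rw [hd]; linarith
    obtain ⟨N, hN⟩ := exists_nat_gt (2 / d)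
    have h1 := growth N
    have h2 : (a (N:ℤ)).re - (a 0).re ≤ 2 := by
      have b1 : |(a (N:ℤ)).re| ≤ 1 := le_trans (Complex.abs_re_le_norm _) (habs _)
      have b2 : |(a 0).re| ≤ 1 := le_trans (Complex.abs_re_le_norm _) (habs _)
      have := abs_le.mp b1
      have := abs_le.mp b2
      linarith [(abs_le.mp b1).1, (abs_le.mp b1).2, (abs_le.mp b2).1, (abs_le.mp b2).2]
    have h3 : (2:ℝ) / d < N := hN
    have h4 : 2 < (N:ℝ) * d := by
      rw [div_lt_iff₀ hdpos] at h3
      linarith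
    linarith
  -- scaling
  intro φ
  rcases eq_or_ne φ 0 with rfl | hφ0
  · simp
  have hφpos : 0 < ‖φ‖ := norm_pos_iff.mpr hφ0
  set u : X := (‖φ‖⁻¹ : ℝ) • φ with hu
  have hunorm : ‖u‖ = 1 := by
    rw [hu, norm_smul, Real.norm_eq_abs, abs_of_pos (by positivity)]
    field_simp
  have h1 := main u hunorm
  have h2 : As u = (‖φ‖⁻¹ : ℝ) • As φ := by
    rw [hu, map_smul_of_tower]
  rw [h2, norm_smul, Real.norm_eq_abs, abs_of_pos (by positivity)] at h1
  calc δ * ‖φ‖ ≤ (‖φ‖⁻¹ * ‖As φ‖) * ‖φ‖ := by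
        exact mul_le_mul_of_nonneg_right h1 (norm_nonneg _)
  _ = ‖As φ‖ := by field_simp

lemma adjoint_sub_smul_apply (T : X →L[ℂ] X) (l : ℂ) (x : X) :
    adjoint (l • (1 : X →L[ℂ] X) - T) x
      = (starRingEnd ℂ l) • x - adjoint T x := by
  rw [map_sub, map_smulₛₗ]
  rw [show (1 : X →L[ℂ] X) = ContinuousLinearMap.id ℂ X from rfl,
    ContinuousLinearMap.adjoint_id]
  simp

/-- Uniform lower bound for the adjoints over the unit circle, by compactness. -/
lemma uniform_adjoint_bound (T : X →L[ℂ] X)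
    (hyp : ∀ l : ℂ, ‖l‖ = 1 → ∃ c > (0:ℝ), ∀ x : X,
      c * ‖x‖ ≤ ‖adjoint (l • (1 : X →L[ℂ] X) - T) x‖) :
    ∃ c > (0:ℝ), ∀ l : ℂ, ‖l‖ = 1 → ∀ x : X,
      c * ‖x‖ ≤ ‖adjoint (l • (1 : X →L[ℂ] X) - T) x‖ := by
  classical
  choose! cfun hcpos hcbd using hyp
  set sph : Set ℂ := Metric.sphere (0:ℂ) 1 with hsph
  have hmem : ∀ l : ℂ, l ∈ sph ↔ ‖l‖ = 1 := by
    intro l; simp [hsph, Metric.mem_sphere, dist_eq_norm]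
  set r : ℂ → ℝ := fun l => if ‖l‖ = 1 then cfun l / 2 else 0 with hr
  set U : ℂ → Set ℂ := fun l => Metric.ball l (r l) with hU
  have hUo : ∀ l, IsOpen (U l) := fun l => Metric.isOpen_ball
  have hcov : sph ⊆ ⋃ l, U l := by
    intro μ hμ
    rw [hmem] at hμ
    refine Set.mem_iUnion.mpr ⟨μ, ?_⟩
    have hrpos : 0 < r μ := by
      rw [hr]; simp only; rw [if_pos hμ]; linarith [hcpos μ hμ]
    exact Metric.mem_ball_self hrpos
  obtain ⟨t, ht⟩ := (isCompact_sphere (0:ℂ) 1).elim_finite_subcover U hUo hcov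
  set t' : Finset ℂ := t.filter (fun l => ‖l‖ = 1) with ht'
  have hfind : ∀ μ ∈ sph, ∃ i ∈ t', μ ∈ Metric.ball i (cfun i / 2) := by
    intro μ hμ
    obtain ⟨i, hit, hiU⟩ := Set.mem_iUnion₂.mp (ht hμ)
    have hiU' : dist μ i < r i := by
      rw [hU] at hiU; exact Metric.mem_ball.mp hiU
    by_cases h : ‖i‖ = 1
    · refine ⟨i, ?_, ?_⟩
      · rw [ht', Finset.mem_filter]; exact ⟨hit, h⟩
      · rw [Metric.mem_ball]
        have : r i = cfun i / 2 := by rw [hr]; simp only; rw [if_pos h]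
        rw [this] at hiU'; exact hiU'
    · exfalso
      have : r i = 0 := by rw [hr]; simp only; rw [if_neg h]
      rw [this] at hiU'
      linarith [dist_nonneg (x := μ) (y := i)]
  have hne : t'.Nonempty := by
    have h1 : (1:ℂ) ∈ sph := by rw [hmem]; simp
    obtain ⟨i, hi, _⟩ := hfind 1 h1
    exact ⟨i, hi⟩
  set c : ℝ := t'.inf' hne (fun l => cfun l / 2) with hc
  have hcpos' : 0 < c := by
    rw [hc, Finset.lt_inf'_iff]
    intro b hb
    rw [ht', Finset.mem_filter] at hb
    linarith [hcpos b hb.2]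
  refine ⟨c, hcpos', ?_⟩
  intro μ hμ x
  obtain ⟨i, hit', hball⟩ := hfind μ ((hmem μ).mpr hμ)
  have hi1 : ‖i‖ = 1 := by
    rw [ht', Finset.mem_filter] at hit'; exact hit'.2
  have hdist : ‖μ - i‖ < cfun i / 2 := by
    rw [Metric.mem_ball, dist_eq_norm] at hball; exact hball
  have hdiff : adjoint (i • (1 : X →L[ℂ] X) - T) x
      - adjoint (μ • (1 : X →L[ℂ] X) - T) x
      = (starRingEnd ℂ (i - μ)) • x := by
    rw [adjoint_sub_smul_apply, adjoint_sub_smul_apply, map_sub]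
    rw [sub_smul]
    abel
  have htri : ‖adjoint (i • (1 : X →L[ℂ] X) - T) x‖
      ≤ ‖adjoint (μ • (1 : X →L[ℂ] X) - T) x‖ + ‖μ - i‖ * ‖x‖ := by
    have h1 : ‖adjoint (i • (1 : X →L[ℂ] X) - T) x
        - adjoint (μ • (1 : X →L[ℂ] X) - T) x‖ = ‖μ - i‖ * ‖x‖ := by
      rw [hdiff, norm_smul, RCLike.norm_conj, ← norm_neg (i - μ)]
      norm_num
    calc ‖adjoint (i • (1 : X →L[ℂ] X) - T) x‖
        ≤ ‖adjoint (μ • (1 : X →L[ℂ] X) - T) x‖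
          + ‖adjoint (i • (1 : X →L[ℂ] X) - T) x
            - adjoint (μ • (1 : X →L[ℂ] X) - T) x‖ := by
          exact norm_le_insert' _ _
    _ = _ := by rw [h1]
  have hbd := hcbd i hi1 x
  have hcle : c ≤ cfun i / 2 := by
    rw [hc]
    exact Finset.inf'_le _ hit'
  have hxnn := norm_nonneg x
  nlinarith [norm_nonneg (adjoint (μ • (1 : X →L[ℂ] X) - T) x)]

/-- Bounded-below adjoint gives bounded-below `A * adjoint A`. -/
lemma mul_adjoint_boundedBelow (A : X →L[ℂ] X) {c : ℝ} (hc : 0 < c)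
    (hb : ∀ x, c * ‖x‖ ≤ ‖adjoint A x‖) :
    ∀ x, (c * c) * ‖x‖ ≤ ‖(A * adjoint A) x‖ := by
  intro x
  rcases eq_or_ne x 0 with rfl | hx
  · simp
  have h1 : (⟪adjoint A x, adjoint A x⟫ : ℂ) = ⟪x, (A * adjoint A) x⟫ := by
    rw [ContinuousLinearMap.adjoint_inner_left]
    rfl
  have h2 : (‖adjoint A x‖ : ℝ) ^ 2 = ‖(⟪x, (A * adjoint A) x⟫ : ℂ)‖ := by
    rw [← h1, inner_self_eq_norm_sq_to_K]
    rw [norm_pow]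
    simp
  have h3 : ‖(⟪x, (A * adjoint A) x⟫ : ℂ)‖ ≤ ‖x‖ * ‖(A * adjoint A) x‖ :=
    norm_inner_le_norm x _
  have h4 : (c * ‖x‖) ^ 2 ≤ ‖adjoint A x‖ ^ 2 := by
    have := hb x
    have hn : 0 ≤ c * ‖x‖ := by positivity
    nlinarith
  have hxpos : 0 < ‖x‖ := norm_pos_iff.mpr hx
  nlinarith


/-- Periodic integration by parts on `[0, 2π]`. -/
lemma per_ibp {F : Type*} [NormedAddCommGroup F] [NormedSpace ℂ F] [CompleteSpace F]
    {v v' : ℝ → F} (hv : ∀ θ : ℝ, HasDerivAt v (v' θ) θ)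
    (hvc : Continuous v) (hv'c : Continuous v')
    (hper : ∀ θ : ℝ, v (θ + 2 * Real.pi) = v θ) {c : ℂ} (hc0 : c ≠ 0)
    (hc1 : Complex.exp (c * ((2 * Real.pi : ℝ) : ℂ)) = 1) :
    ∫ θ in (0:ℝ)..(2 * Real.pi), Complex.exp (c * θ) • v θ
      = (-c⁻¹) • ∫ θ in (0:ℝ)..(2 * Real.pi), Complex.exp (c * θ) • v' θ := by
  have hec : Continuous fun θ : ℝ => Complex.exp (c * θ) :=
    Complex.continuous_exp.comp (continuous_const.mul Complex.continuous_ofReal)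
  have hexp : ∀ θ : ℝ, HasDerivAt (fun t : ℝ => Complex.exp (c * t))
      (c * Complex.exp (c * θ)) θ := by
    intro θ
    have h2 := Complex.hasDerivAt_exp (c * θ)
    have h3 : HasDerivAt (fun z : ℂ => c * z) c (θ : ℂ) := by
      simpa using (hasDerivAt_id (θ : ℂ)).const_mul c
    have h4 := h2.comp (θ : ℂ) h3
    have h5 : HasDerivAt (fun z : ℂ => Complex.exp (c * z))
        (c * Complex.exp (c * θ)) (θ : ℂ) := by
      have h4' : HasDerivAt (fun z : ℂ => Complex.exp (c * z)) (Complex.exp (c * θ) * c) (θ : ℂ) := h4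
      rwa [mul_comm (Complex.exp _) c] at h4'
    exact h5.comp_ofReal
  set Fn : ℝ → F := fun θ => Complex.exp (c * θ) • v θ with hFn
  have hF : ∀ θ : ℝ, HasDerivAt Fn
      (Complex.exp (c * θ) • v' θ + (c * Complex.exp (c * θ)) • v θ) θ := by
    intro θ
    have := (hexp θ).smul (hv θ)
    exact this
  have hint1 : IntervalIntegrable (fun θ : ℝ => Complex.exp (c * θ) • v' θ)
      MeasureTheory.volume 0 (2 * Real.pi) := (hec.smul hv'c).intervalIntegrable _ _
  have hint2 : IntervalIntegrable (fun θ : ℝ => (c * Complex.exp (c * θ)) • v θ)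
      MeasureTheory.volume 0 (2 * Real.pi) :=
    ((continuous_const.mul hec).smul hvc).intervalIntegrable _ _
  have hInt := intervalIntegral.integral_eq_sub_of_hasDerivAt
    (f := Fn) (f' := fun θ => Complex.exp (c * θ) • v' θ + (c * Complex.exp (c * θ)) • v θ)
    (a := 0) (b := 2 * Real.pi) (fun θ _ => hF θ) (hint1.add hint2)
  have hFb : Fn (2 * Real.pi) - Fn 0 = 0 := by
    have hv2 : v (2 * Real.pi) = v 0 := by
      have := hper 0
      simpa using this
    rw [hFn]
    simp only
    rw [hv2]
    have he0 : Complex.exp (c * ((0:ℝ):ℂ)) = 1 := by norm_num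
    rw [hc1, he0]
    simp
  rw [hFb] at hInt
  rw [intervalIntegral.integral_add hint1 hint2] at hInt
  have hsm : ∀ θ : ℝ, (c * Complex.exp (c * θ)) • v θ = c • (Complex.exp (c * θ) • v θ) := by
    intro θ; rw [mul_smul]
  simp only [hsm] at hInt
  rw [intervalIntegral.integral_smul] at hInt
  set I1 := ∫ θ in (0:ℝ)..(2 * Real.pi), Complex.exp (c * θ) • v θ with hI1
  set I2 := ∫ θ in (0:ℝ)..(2 * Real.pi), Complex.exp (c * θ) • v' θ with hI2
  have h6 : c • I1 = -I2 := by
    rw [add_eq_zero_iff_eq_neg] at hInt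
    rw [hInt, neg_neg]
  have h7 : I1 = c⁻¹ • (c • I1) := by
    rw [smul_smul, inv_mul_cancel₀ hc0, one_smul]
  rw [h7, h6, smul_neg, neg_smul]

/-- The summable Fourier kernel of a right inverse along the unit circle. -/
lemma exists_kernel (T : (X →L[ℂ] X)ˣ)
    (hbd : ∃ c > (0:ℝ), ∀ l : ℂ, ‖l‖ = 1 → ∀ x : X,
      c * ‖x‖ ≤ ‖adjoint (l • (1 : X →L[ℂ] X) - (T : X →L[ℂ] X)) x‖) :
    ∃ K : ℤ → (X →L[ℂ] X), Summable (fun j : ℤ => ‖K j‖) ∧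
      ∀ j : ℤ, K (j-1) - (T : X →L[ℂ] X) * K j
        = if j = 0 then (((2 * Real.pi : ℝ) : ℂ)) • (1 : X →L[ℂ] X) else 0 := by
  obtain ⟨c, hcpos, hc⟩ := hbd
  set Tc : X →L[ℂ] X := (T : X →L[ℂ] X) with hTc
  set A : ℝ → (X →L[ℂ] X) := fun θ => Complex.exp (θ * Complex.I) • 1 - Tc with hAdef
  have hl1 : ∀ θ : ℝ, ‖Complex.exp (θ * Complex.I)‖ = 1 := by
    intro θ
    rw [Complex.norm_exp]
    simp
  set As : ℝ → (X →L[ℂ] X) :=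
    fun θ => Complex.exp (-(θ * Complex.I)) • 1 - adjoint Tc with hAsdef
  have hconj : ∀ θ : ℝ, (starRingEnd ℂ) (Complex.exp (θ * Complex.I))
      = Complex.exp (-(θ * Complex.I)) := by
    intro θ
    rw [← Complex.exp_conj]
    congr 1
    simp [map_mul, Complex.conj_ofReal, Complex.conj_I]
  have hadj : ∀ θ : ℝ, adjoint (A θ) = As θ := by
    intro θ
    ext x
    rw [hAdef]
    simp only
    rw [adjoint_sub_smul_apply, hconj θ, hAsdef]
    simp only [ContinuousLinearMap.sub_apply, ContinuousLinearMap.smul_apply,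
      ContinuousLinearMap.one_apply]
  have hAb : ∀ θ : ℝ, ∀ x : X, c * ‖x‖ ≤ ‖adjoint (A θ) x‖ := by
    intro θ x
    rw [hAdef]
    exact hc _ (hl1 θ) x
  set B : ℝ → (X →L[ℂ] X) := fun θ => A θ * As θ with hBdef
  have hBA : ∀ θ, B θ = A θ * adjoint (A θ) := by
    intro θ; rw [hBdef]; simp only; rw [hadj]
  have hBb : ∀ θ : ℝ, ∀ x : X, (c*c) * ‖x‖ ≤ ‖B θ x‖ := by
    intro θ x
    rw [hBA θ]
    exact mul_adjoint_boundedBelow (A θ) hcpos (hAb θ) x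
  have hBsa : ∀ θ : ℝ, adjoint (B θ) = B θ := by
    intro θ
    rw [hBA θ]
    have h1 : A θ * adjoint (A θ) = (A θ).comp (adjoint (A θ)) := rfl
    rw [h1, ContinuousLinearMap.adjoint_comp, ContinuousLinearMap.adjoint_adjoint]
  have hBu : ∀ θ : ℝ, IsUnit (B θ) := fun θ =>
    isUnit_of_selfAdjoint_of_boundedBelow (B θ) (hBsa θ) (by positivity) (hBb θ)
  -- smoothness
  set sm : ℂ →L[ℂ] (X →L[ℂ] X) :=
    (ContinuousLinearMap.id ℂ ℂ).smulRight (1 : X →L[ℂ] X) with hsm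
  have hsm_apply : ∀ z : ℂ, sm z = z • (1 : X →L[ℂ] X) := by
    intro z; rw [hsm]; simp
  have hof : ContDiff ℝ (⊤:ℕ∞) (fun θ : ℝ => (θ : ℂ) * Complex.I) :=
    Complex.ofRealCLM.contDiff.mul contDiff_const
  have hce : ContDiff ℝ (⊤:ℕ∞) (fun θ : ℝ => Complex.exp (θ * Complex.I)) :=
    Complex.contDiff_exp.comp hof
  have hce' : ContDiff ℝ (⊤:ℕ∞) (fun θ : ℝ => Complex.exp (-(θ * Complex.I))) :=
    Complex.contDiff_exp.comp hof.neg
  have hAsm : ContDiff ℝ (⊤:ℕ∞) A := by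
    have h1 : A = fun θ : ℝ => sm (Complex.exp (θ * Complex.I)) - Tc := by
      funext θ; rw [hAdef, hsm_apply]
    rw [h1]
    exact (((sm.restrictScalars ℝ).contDiff).comp hce).sub contDiff_const
  have hAssm : ContDiff ℝ (⊤:ℕ∞) As := by
    have h1 : As = fun θ : ℝ => sm (Complex.exp (-(θ * Complex.I))) - adjoint Tc := by
      funext θ; rw [hAsdef, hsm_apply]
    rw [h1]
    exact (((sm.restrictScalars ℝ).contDiff).comp hce').sub contDiff_const
  have hBsm : ContDiff ℝ (⊤:ℕ∞) B := hAsm.mul hAssm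
  have hIsm : ContDiff ℝ (⊤:ℕ∞) (fun θ => Ring.inverse (B θ)) := by
    rw [contDiff_iff_contDiffAt]
    intro θ
    have h1 := contDiffAt_ringInverse ℝ (n := (⊤:ℕ∞)) (hBu θ).unit
    rw [IsUnit.unit_spec] at h1
    exact h1.comp θ hBsm.contDiffAt
  set Rf : ℝ → (X →L[ℂ] X) := fun θ => As θ * Ring.inverse (B θ) with hRfdef
  have hRfsm : ContDiff ℝ (⊤:ℕ∞) Rf := hAssm.mul hIsm
  have hARf : ∀ θ : ℝ, A θ * Rf θ = 1 := by
    intro θ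
    rw [hRfdef]
    simp only
    rw [← mul_assoc]
    have hb : A θ * As θ = B θ := rfl
    rw [hb]
    exact Ring.mul_inverse_cancel _ (hBu θ)
  -- periodicity
  have hper_exp : ∀ θ : ℝ, Complex.exp (((θ + 2*Real.pi : ℝ):ℂ) * Complex.I)
      = Complex.exp (θ * Complex.I) := by
    intro θ
    rw [show (((θ + 2*Real.pi : ℝ):ℂ) * Complex.I)
        = (θ:ℂ) * Complex.I + 2 * Real.pi * Complex.I by push_cast; ring]
    rw [Complex.exp_add, Complex.exp_two_pi_mul_I, mul_one]
  have hper_exp' : ∀ θ : ℝ, Complex.exp (-(((θ + 2*Real.pi : ℝ):ℂ) * Complex.I))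
      = Complex.exp (-(θ * Complex.I)) := by
    intro θ
    rw [show (-(((θ + 2*Real.pi : ℝ):ℂ) * Complex.I))
        = -((θ:ℂ) * Complex.I) + (-2) * Real.pi * Complex.I by push_cast; ring]
    rw [Complex.exp_add]
    rw [show ((-2) * (Real.pi:ℂ) * Complex.I) = ((-2:ℤ):ℂ) * (2 * Real.pi * Complex.I) / 2 by
      push_cast; ring]
    rw [show ((-2:ℤ):ℂ) * (2 * Real.pi * Complex.I) / 2 = ((-1:ℤ):ℂ) * (2 * Real.pi * Complex.I) by
      push_cast; ring]
    rw [Complex.exp_int_mul_two_pi_mul_I, mul_one]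
  have hperRf : ∀ θ : ℝ, Rf (θ + 2*Real.pi) = Rf θ := by
    intro θ
    have hA : A (θ + 2*Real.pi) = A θ := by
      rw [hAdef]; simp only; rw [hper_exp θ]
    have hAs : As (θ + 2*Real.pi) = As θ := by
      rw [hAsdef]; simp only; rw [hper_exp' θ]
    have hB : B (θ + 2*Real.pi) = B θ := by rw [hBdef]; simp only; rw [hA, hAs]
    rw [hRfdef]; simp only; rw [hAs, hB]
  -- derivatives
  have hdiff1 : Differentiable ℝ Rf ∧ ContDiff ℝ (⊤:ℕ∞) (deriv Rf) := by
    rw [← contDiff_infty_iff_deriv]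
    exact hRfsm
  set Rf' : ℝ → (X →L[ℂ] X) := deriv Rf with hRf'def
  have hdiff2 : Differentiable ℝ Rf' ∧ ContDiff ℝ (⊤:ℕ∞) (deriv Rf') := by
    rw [← contDiff_infty_iff_deriv]
    exact hdiff1.2
  set Rf'' : ℝ → (X →L[ℂ] X) := deriv Rf' with hRf''def
  have hv1 : ∀ θ, HasDerivAt Rf (Rf' θ) θ := fun θ => (hdiff1.1 θ).hasDerivAt
  have hv2 : ∀ θ, HasDerivAt Rf' (Rf'' θ) θ := fun θ => (hdiff2.1 θ).hasDerivAt
  have hcRf : Continuous Rf := hRfsm.continuous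
  have hcRf' : Continuous Rf' := hdiff1.2.continuous
  have hcRf'' : Continuous Rf'' := hdiff2.2.continuous
  have hperRf' : ∀ θ : ℝ, Rf' (θ + 2*Real.pi) = Rf' θ := by
    intro θ
    have h1 : (fun y => Rf (y + 2*Real.pi)) = Rf := funext hperRf
    calc Rf' (θ + 2*Real.pi) = deriv (fun y => Rf (y + 2*Real.pi)) θ :=
          (deriv_comp_add_const Rf (2*Real.pi) θ).symm
    _ = Rf' θ := by rw [h1]
  -- the kernel
  set cnum : ℤ → ℂ := fun j => -(j:ℂ) * Complex.I with hcnum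
  set K : ℤ → (X →L[ℂ] X) :=
    fun j => ∫ θ in (0:ℝ)..(2*Real.pi), Complex.exp (cnum j * θ) • Rf θ with hK
  have hecont : ∀ j : ℤ, Continuous fun θ : ℝ => Complex.exp (cnum j * θ) := fun j =>
    Complex.continuous_exp.comp (continuous_const.mul Complex.continuous_ofReal)
  have heint : ∀ j : ℤ, IntervalIntegrable (fun θ : ℝ => Complex.exp (cnum j * θ) • Rf θ)
      MeasureTheory.volume 0 (2*Real.pi) := fun j =>
    ((hecont j).smul hcRf).intervalIntegrable _ _
  have hcnum_exp : ∀ j : ℤ, Complex.exp (cnum j * ((2*Real.pi:ℝ):ℂ)) = 1 := by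
    intro j
    rw [show cnum j * ((2*Real.pi:ℝ):ℂ) = ((-j : ℤ):ℂ) * (2 * Real.pi * Complex.I) by
      rw [hcnum]; push_cast; ring]
    exact Complex.exp_int_mul_two_pi_mul_I (-j)
  have hcnum0 : ∀ j : ℤ, j ≠ 0 → cnum j ≠ 0 := by
    intro j hj
    rw [hcnum]
    simp only [ne_eq, neg_mul, neg_eq_zero, mul_eq_zero, Complex.I_ne_zero, or_false]
    exact_mod_cast hj
  -- bound ‖K j‖ for j ≠ 0
  obtain ⟨M, hM⟩ := (isCompact_uIcc (a := (0:ℝ)) (b := 2*Real.pi)).exists_bound_of_continuousOn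
    hcRf''.continuousOn
  have hMnn : 0 ≤ M := le_trans (norm_nonneg _) (hM 0 Set.left_mem_uIcc)
  have hKb : ∀ j : ℤ, j ≠ 0 → ‖K j‖ ≤ (M * (2*Real.pi)) * ((j:ℝ)^2)⁻¹ := by
    intro j hj
    have hc0 := hcnum0 j hj
    have hib1 := per_ibp hv1 hcRf hcRf' hperRf hc0 (hcnum_exp j)
    have hib2 := per_ibp hv2 hcRf' hcRf'' hperRf' hc0 (hcnum_exp j)
    have hKj : K j = ((-(cnum j)⁻¹) * (-(cnum j)⁻¹)) •
        ∫ θ in (0:ℝ)..(2*Real.pi), Complex.exp (cnum j * θ) • Rf'' θ := by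
      rw [hK]
      simp only
      rw [hib1, hib2, smul_smul]
    have hexp1 : ∀ θ : ℝ, ‖Complex.exp (cnum j * θ)‖ = 1 := by
      intro θ
      rw [Complex.norm_exp]
      have : (cnum j * θ).re = 0 := by
        rw [hcnum]
        simp
      rw [this, Real.exp_zero]
    have hnormint : ‖∫ θ in (0:ℝ)..(2*Real.pi), Complex.exp (cnum j * θ) • Rf'' θ‖
        ≤ M * |2*Real.pi - 0| := by
      apply intervalIntegral.norm_integral_le_of_norm_le_const
      intro θ hθ
      have hθ' : θ ∈ Set.uIcc (0:ℝ) (2*Real.pi) := Set.uIoc_subset_uIcc hθ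
      rw [norm_smul, hexp1, one_mul]
      exact hM θ hθ'
    have hcn : ‖cnum j‖ = |(j:ℝ)| := by
      rw [hcnum]
      simp only [norm_neg, norm_mul, Complex.norm_I, mul_one]
      rw [show ((j:ℤ):ℂ) = (((j:ℤ):ℝ):ℂ) by push_cast; ring]
      rw [Complex.norm_real, Real.norm_eq_abs]
    have hsc : ‖(-(cnum j)⁻¹) * (-(cnum j)⁻¹)‖ = ((j:ℝ)^2)⁻¹ := by
      rw [norm_mul, norm_neg, norm_inv, hcn, ← mul_inv]
      congr 1
      rw [← _root_.sq_abs]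
      ring
    have habs2pi : |2*Real.pi - 0| = 2*Real.pi := by
      rw [sub_zero, abs_of_pos (by positivity)]
    rw [hKj, norm_smul, hsc]
    rw [habs2pi] at hnormint
    have hjnn : (0:ℝ) ≤ ((j:ℝ)^2)⁻¹ := by positivity
    calc ((j:ℝ)^2)⁻¹ * ‖∫ θ in (0:ℝ)..(2*Real.pi), Complex.exp (cnum j * θ) • Rf'' θ‖
        ≤ ((j:ℝ)^2)⁻¹ * (M * (2*Real.pi)) := by
          exact mul_le_mul_of_nonneg_left hnormint hjnn
    _ = (M * (2*Real.pi)) * ((j:ℝ)^2)⁻¹ := by ring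
  -- summability
  have hsum : Summable (fun j : ℤ => ‖K j‖) := by
    apply Summable.of_norm_bounded_eventually (g := fun j : ℤ => (M*(2*Real.pi)) * ((j:ℝ)^2)⁻¹)
    · apply Summable.mul_left
      have h1 : Summable (fun n : ℤ => 1 / (n:ℝ) ^ (2:ℕ)) :=
        Real.summable_one_div_int_pow.mpr (by norm_num)
      have h2 : (fun n : ℤ => ((n:ℝ)^2)⁻¹) = (fun n : ℤ => 1 / (n:ℝ) ^ (2:ℕ)) := by
        funext n; rw [one_div]
      rw [h2]
      exact h1
    · rw [Filter.eventually_cofinite]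
      apply Set.Finite.subset (Set.finite_singleton (0:ℤ))
      intro j hj
      simp only [Set.mem_setOf_eq] at hj
      simp only [Set.mem_singleton_iff]
      by_contra hj0
      apply hj
      rw [Real.norm_eq_abs, _root_.abs_of_nonneg (norm_nonneg _)]
      exact hKb j hj0
  -- the key identity
  have hid : ∀ j : ℤ, K (j-1) - Tc * K j
      = if j = 0 then (((2 * Real.pi : ℝ) : ℂ)) • (1 : X →L[ℂ] X) else 0 := by
    intro j
    have hint2 : IntervalIntegrable
        (fun θ : ℝ => Complex.exp (cnum j * θ) • (Tc * Rf θ))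
        MeasureTheory.volume 0 (2*Real.pi) :=
      ((hecont j).smul (continuous_const.mul hcRf)).intervalIntegrable _ _
    have hint1 : IntervalIntegrable
        (fun θ : ℝ => Complex.exp (cnum j * θ) • (Complex.exp (θ * Complex.I) • Rf θ))
        MeasureTheory.volume 0 (2*Real.pi) := by
      apply Continuous.intervalIntegrable
      apply (hecont j).smul
      exact (Complex.continuous_exp.comp (Complex.continuous_ofReal.mul
        continuous_const)).smul hcRf
    have hTcK : Tc * K j
        = ∫ θ in (0:ℝ)..(2*Real.pi), Complex.exp (cnum j * θ) • (Tc * Rf θ) := by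
      set L : (X →L[ℂ] X) →L[ℂ] (X →L[ℂ] X) :=
        ContinuousLinearMap.mul ℂ (X →L[ℂ] X) Tc with hL
      have hLap : ∀ u : X →L[ℂ] X, L u = Tc * u := by
        intro u; rw [hL]; rfl
      have h1 : Tc * K j = L (K j) := (hLap _).symm
      rw [h1, hK]
      simp only
      rw [← L.intervalIntegral_comp_comm (heint j)]
      congr 1
      funext θ
      rw [map_smul, hLap]
    have hKjm : K (j-1) = ∫ θ in (0:ℝ)..(2*Real.pi),
        Complex.exp (cnum j * θ) • (Complex.exp (θ * Complex.I) • Rf θ) := by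
      rw [hK]
      simp only
      congr 1
      funext θ
      have h1 : cnum (j-1) * θ = cnum j * θ + θ * Complex.I := by
        rw [hcnum]; push_cast; ring
      rw [h1, Complex.exp_add, mul_smul]
    rw [hKjm, hTcK, ← intervalIntegral.integral_sub hint1 hint2]
    have h2 : ∀ θ : ℝ, Complex.exp (cnum j * θ) • (Complex.exp (θ * Complex.I) • Rf θ)
        - Complex.exp (cnum j * θ) • (Tc * Rf θ)
        = Complex.exp (cnum j * θ) • (1 : X →L[ℂ] X) := by
      intro θ
      rw [← smul_sub]
      congr 1
      have h3 : Complex.exp (θ * Complex.I) • Rf θ - Tc * Rf θ = A θ * Rf θ := by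
        rw [hAdef]
        simp only
        rw [sub_mul, smul_mul_assoc, one_mul]
      rw [h3, hARf θ]
    simp only [h2]
    rw [intervalIntegral.integral_smul_const]
    rcases eq_or_ne j 0 with rfl | hj
    · simp only [if_pos rfl]
      have h4 : ∀ θ : ℝ, Complex.exp (cnum 0 * θ) = 1 := by
        intro θ
        rw [hcnum]
        simp
      simp only [h4]
      rw [intervalIntegral.integral_const]
      congr 1
      rw [sub_zero]
      rw [Complex.real_smul]
      rw [mul_one]
    · rw [if_neg hj]
      have h5 : (∫ θ in (0:ℝ)..(2*Real.pi), Complex.exp (cnum j * θ)) = 0 := by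
        rw [integral_exp_mul_complex (hcnum0 j hj)]
        rw [hcnum_exp j]
        norm_num
      rw [h5, zero_smul]
  exact ⟨K, hsum, hid⟩

-- real content
lemma Tpow_succ_apply {Y : Type*} [NormedAddCommGroup Y] [NormedSpace ℂ Y]
    (T : (Y →L[ℂ] Y)ˣ) (n : ℤ) (v : Y) :
    (T : Y →L[ℂ] Y) (((T ^ n : (Y →L[ℂ] Y)ˣ) : Y →L[ℂ] Y) v)
      = ((T ^ (n+1) : (Y →L[ℂ] Y)ˣ) : Y →L[ℂ] Y) v := by
  have h : (T ^ (n+1) : (Y →L[ℂ] Y)ˣ) = T * T ^ n := by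
    rw [← zpow_one_add T n]; ring_nf
  rw [h, Units.val_mul, ContinuousLinearMap.mul_apply]

lemma Tpow_pred_apply {Y : Type*} [NormedAddCommGroup Y] [NormedSpace ℂ Y]
    (T : (Y →L[ℂ] Y)ˣ) (n : ℤ) (v : Y) :
    ((T⁻¹ : (Y →L[ℂ] Y)ˣ) : Y →L[ℂ] Y) (((T ^ n : (Y →L[ℂ] Y)ˣ) : Y →L[ℂ] Y) v)
      = ((T ^ (n-1) : (Y →L[ℂ] Y)ˣ) : Y →L[ℂ] Y) v := by
  have h : (T ^ (n-1) : (Y →L[ℂ] Y)ˣ) = T⁻¹ * T ^ n := by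
    rw [show T⁻¹ = T ^ (-1 : ℤ) by rw [zpow_neg_one], ← zpow_add T]
    congr 1
    ring
  rw [h, Units.val_mul, ContinuousLinearMap.mul_apply]

theorem shadowing_of_kernel (T : (X →L[ℂ] X)ˣ)
    (K : ℤ → (X →L[ℂ] X)) (hKsum : Summable (fun j : ℤ => ‖K j‖))
    (hKid : ∀ j : ℤ, K (j-1) - (T : X →L[ℂ] X) * K j
        = if j = 0 then (((2 * Real.pi : ℝ) : ℂ)) • (1 : X →L[ℂ] X) else 0) :
    ShadowingProperty T := by
  intro ε hε
  set Ct : ℝ := ∑' j : ℤ, ‖K j‖ with hCt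
  have hCtnn : 0 ≤ Ct := tsum_nonneg (fun j => norm_nonneg _)
  set Cw : ℝ := (2*Real.pi)⁻¹ * Ct with hCw
  have hCwnn : 0 ≤ Cw := by positivity
  set δ : ℝ := ε / (Cw + 1) with hδdef
  have hδpos : 0 < δ := by positivity
  refine ⟨δ, hδpos, ?_⟩
  intro x hx
  set z : ℤ → X := fun n => x (n+1) - (T : X →L[ℂ] X) (x n) with hz
  have hzb : ∀ n : ℤ, ‖z n‖ ≤ δ := hx
  have hδnn : 0 ≤ δ := hδpos.le
  have hsummand : ∀ n : ℤ, Summable (fun j : ℤ => (K j) (z (n+j))) := by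
    intro n
    apply Summable.of_norm_bounded (g := fun j : ℤ => ‖K j‖ * δ) (hKsum.mul_right δ)
    intro j
    calc ‖(K j) (z (n+j))‖ ≤ ‖K j‖ * ‖z (n+j)‖ := (K j).le_opNorm _
    _ ≤ ‖K j‖ * δ := mul_le_mul_of_nonneg_left (hzb _) (norm_nonneg _)
  have hsummandnorm : ∀ n : ℤ, Summable (fun j : ℤ => ‖(K j) (z (n+j))‖) := by
    intro n
    apply Summable.of_nonneg_of_le (fun j => norm_nonneg _) (fun j => ?_) (hKsum.mul_right δ)
    calc ‖(K j) (z (n+j))‖ ≤ ‖K j‖ * ‖z (n+j)‖ := (K j).le_opNorm _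
    _ ≤ ‖K j‖ * δ := mul_le_mul_of_nonneg_left (hzb _) (norm_nonneg _)
  set w : ℤ → X := fun n => (((2*Real.pi : ℝ):ℂ))⁻¹ • ∑' j : ℤ, (K j) (z (n+j)) with hw
  have hpi0 : ((2*Real.pi : ℝ):ℂ) ≠ 0 := by
    rw [ne_eq, Complex.ofReal_eq_zero]
    positivity
  have hwb : ∀ n : ℤ, ‖w n‖ ≤ Cw * δ := by
    intro n
    rw [hw]
    simp only
    rw [norm_smul, norm_inv, Complex.norm_real, Real.norm_eq_abs,
      abs_of_pos (by positivity : (0:ℝ) < 2*Real.pi)]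
    have h1 : ‖∑' j : ℤ, (K j) (z (n+j))‖ ≤ Ct * δ := by
      calc ‖∑' j : ℤ, (K j) (z (n+j))‖ ≤ ∑' j : ℤ, ‖(K j) (z (n+j))‖ :=
            norm_tsum_le_tsum_norm (hsummandnorm n)
      _ ≤ ∑' j : ℤ, ‖K j‖ * δ := by
          apply Summable.tsum_le_tsum _ (hsummandnorm n) (hKsum.mul_right δ)
          intro j
          calc ‖(K j) (z (n+j))‖ ≤ ‖K j‖ * ‖z (n+j)‖ := (K j).le_opNorm _
          _ ≤ ‖K j‖ * δ := mul_le_mul_of_nonneg_left (hzb _) (norm_nonneg _)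
      _ = Ct * δ := by rw [tsum_mul_right]
    calc (2*Real.pi)⁻¹ * ‖∑' j : ℤ, (K j) (z (n+j))‖ ≤ (2*Real.pi)⁻¹ * (Ct * δ) := by
          apply mul_le_mul_of_nonneg_left h1 (by positivity)
    _ = Cw * δ := by rw [hCw]; ring
  have hTsummand : ∀ n : ℤ, Summable (fun j : ℤ => (T : X →L[ℂ] X) ((K j) (z (n+j)))) := by
    intro n
    exact (hsummand n).map ((T : X →L[ℂ] X) : X →L[ℂ] X).toLinearMap.toAddMonoidHom
      (T : X →L[ℂ] X).continuous
  have hshiftsummand : ∀ n : ℤ, Summable (fun j : ℤ => (K (j-1)) (z (n+j))) := by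
    intro n
    have h1 : Summable (fun j : ℤ => (K j) (z (n+1+j))) := hsummand (n+1)
    have h2 : ((fun i : ℤ => (K (i-1)) (z (n+i))) ∘ (⇑(Equiv.addRight (1:ℤ))))
        = fun j : ℤ => (K j) (z (n+1+j)) := by
      funext j
      simp only [Function.comp_apply, Equiv.coe_addRight]
      rw [show j + 1 - 1 = j by ring, show n + (j+1) = n+1+j by ring]
    exact ((Equiv.addRight (1:ℤ)).summable_iff).mp (by rw [h2]; exact h1)
  have hwrec : ∀ n : ℤ, w (n+1) - (T : X →L[ℂ] X) (w n) = z n := by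
    intro n
    have hTw : (T : X →L[ℂ] X) (w n)
        = (((2*Real.pi : ℝ):ℂ))⁻¹ • ∑' j : ℤ, (T : X →L[ℂ] X) ((K j) (z (n+j))) := by
      rw [hw]
      simp only
      rw [ContinuousLinearMap.map_smul]
      congr 1
      exact ((T : X →L[ℂ] X)).map_tsum (hsummand n)
    have hw1 : w (n+1) = (((2*Real.pi : ℝ):ℂ))⁻¹ • ∑' j : ℤ, (K (j-1)) (z (n+j)) := by
      rw [hw]
      simp only
      congr 1
      have h2 : (fun j : ℤ => (fun i : ℤ => (K (i-1)) (z (n+i))) ((Equiv.addRight (1:ℤ)) j))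
          = fun j : ℤ => (K j) (z (n+1+j)) := by
        funext j
        simp only [Equiv.coe_addRight]
        rw [show j + 1 - 1 = j by ring, show n + (j+1) = n+1+j by ring]
      have h3 := (Equiv.addRight (1:ℤ)).tsum_eq (f := fun i : ℤ => (K (i-1)) (z (n+i)))
      rw [← h3, h2]
    rw [hw1, hTw, ← smul_sub, ← Summable.tsum_sub (hshiftsummand n) (hTsummand n)]
    have h4 : ∀ j : ℤ, (K (j-1)) (z (n+j)) - (T : X →L[ℂ] X) ((K j) (z (n+j)))
        = if j = 0 then (((2 * Real.pi : ℝ) : ℂ)) • z n else 0 := by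
      intro j
      have h5 : (K (j-1)) (z (n+j)) - (T : X →L[ℂ] X) ((K j) (z (n+j)))
          = (K (j-1) - (T : X →L[ℂ] X) * K j) (z (n+j)) := by
        rw [ContinuousLinearMap.sub_apply, ContinuousLinearMap.mul_apply]
      rw [h5, hKid j]
      split_ifs with h
      · subst h
        rw [ContinuousLinearMap.smul_apply, ContinuousLinearMap.one_apply, add_zero]
      · rw [ContinuousLinearMap.zero_apply]
    simp only [h4]
    rw [tsum_eq_single (0:ℤ) (fun j hj => by rw [if_neg hj])]
    rw [if_pos rfl, smul_smul, inv_mul_cancel₀ hpi0, one_smul]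
  -- conclusion
  set y : X := x 0 - w 0 with hy
  have hv : ∀ n : ℤ, x n - w n = ((T ^ n : (X →L[ℂ] X)ˣ) : X →L[ℂ] X) y := by
    have hvrec : ∀ n : ℤ, x (n+1) - w (n+1) = (T : X →L[ℂ] X) (x n - w n) := by
      intro n
      have h1 : x (n+1) = z n + (T : X →L[ℂ] X) (x n) := by
        rw [hz]; simp only; abel
      have h2 : w (n+1) = z n + (T : X →L[ℂ] X) (w n) := by
        have := hwrec n
        rw [sub_eq_iff_eq_add] at this
        rw [this]
      rw [h1, h2, map_sub]
      abel
    intro n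
    induction n using Int.induction_on with
    | zero => rw [hy]; simp
    | succ k ih =>
      rw [hvrec k, ih, Tpow_succ_apply]
    | pred k ih =>
      have h6 := hvrec (-(k:ℤ)-1)
      rw [show (-(k:ℤ)-1) + 1 = -(k:ℤ) by ring] at h6
      have h7 : ((T⁻¹ : (X →L[ℂ] X)ˣ) : X →L[ℂ] X) (x (-(k:ℤ)) - w (-(k:ℤ)))
          = x (-(k:ℤ)-1) - w (-(k:ℤ)-1) := by
        rw [h6]
        have h8 : ∀ v : X, ((T⁻¹ : (X →L[ℂ] X)ˣ) : X →L[ℂ] X) ((T : X →L[ℂ] X) v) = v := by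
          intro v
          have h9 : ((T⁻¹ : (X →L[ℂ] X)ˣ) : X →L[ℂ] X) * (T : X →L[ℂ] X) = 1 := by
            rw [← Units.val_mul]
            simp
          rw [← ContinuousLinearMap.mul_apply, h9, ContinuousLinearMap.one_apply]
        exact h8 _
      rw [← h7, ih, Tpow_pred_apply]
  refine ⟨y, ?_⟩
  intro n
  have h10 : x n - ((T ^ n : (X →L[ℂ] X)ˣ) : X →L[ℂ] X) y = w n := by
    rw [← hv n]; abel
  rw [h10]
  calc ‖w n‖ ≤ Cw * δ := hwb n
  _ ≤ (Cw + 1) * δ := by nlinarith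
  _ = ε := by rw [hδdef]; field_simp


/-- An invertible bounded linear operator on a complex Hilbert space has the shadowing
property if and only if its right spectrum is disjoint from the unit circle. -/
theorem shadowing_iff_rightSpectrum_disjoint_unitCircle (T : (X →L[ℂ] X)ˣ) :
    ShadowingProperty T ↔
      RightSpectrum (T : X →L[ℂ] X) ∩ {l : ℂ | ‖l‖ = 1} = ∅ := by
  constructor
  · intro hSh
    rw [Set.eq_empty_iff_forall_notMem]
    rintro l ⟨hlRS, hl1⟩
    rw [Set.mem_setOf_eq] at hl1
    simp only [RightSpectrum, Set.mem_setOf_eq] at hlRS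
    obtain ⟨δ, hδ, hbb⟩ := adjoint_bddBelow_of_shadowing T hSh hl1
    exact hlRS (exists_rightInverse_of_adjoint_boundedBelow _ hδ hbb)
  · intro hemp
    have hyp : ∀ l : ℂ, ‖l‖ = 1 → ∃ c > (0:ℝ), ∀ x : X,
        c * ‖x‖ ≤ ‖adjoint (l • (1 : X →L[ℂ] X) - (T : X →L[ℂ] X)) x‖ := by
      intro l hl
      have hnot : l ∉ RightSpectrum (T : X →L[ℂ] X) := by
        intro hmem
        rw [Set.eq_empty_iff_forall_notMem] at hemp
        exact hemp l ⟨hmem, hl⟩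
      simp only [RightSpectrum, Set.mem_setOf_eq, not_not] at hnot
      obtain ⟨S, hS⟩ := hnot
      exact ⟨(‖S‖+1)⁻¹, by positivity, adjoint_boundedBelow_of_rightInverse hS⟩
    obtain ⟨K, hKsum, hKid⟩ := exists_kernel T (uniform_adjoint_bound _ hyp)
    exact shadowing_of_kernel T K hKsum hKid
end
end

section
/- Let X be a complex Hilbert space, let T be an invertible bounded linear operator on X with the shadowing property, and suppose λ ∈ σ_r(T) with |λ| = 1. Then a contradiction follows; that is, if T has the shadowing property, then λI − T has a bounded linear right inverse for every λ with |λ| = 1. -/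
open Filter Topology

noncomputable section

variable {X : Type*} [NormedAddCommGroup X] [InnerProductSpace ℂ X] [CompleteSpace X]

lemma approx_solve (T : (X →L[ℂ] X)ˣ) (hT : ShadowingProperty T) {l : ℂ} (hl : ‖l‖ = 1) :
    ∃ δ > (0:ℝ), ∀ b : X, ‖b‖ ≤ δ → ∀ N : ℕ, 0 < N →
      ∃ v : X, ‖v‖ ≤ 1 ∧ ‖(l • (1 : X →L[ℂ] X) - (T : X →L[ℂ] X)) v - b‖ ≤ 2 / N := by
  obtain ⟨δ, hδ, hsh⟩ := hT 1 one_pos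
  refine ⟨δ, hδ, fun b hb N hN => ?_⟩
  set Tc : X →L[ℂ] X := (T : X →L[ℂ] X) with hTc
  set A : X →L[ℂ] X := l • (1 : X →L[ℂ] X) - Tc with hA
  have hl0 : l ≠ 0 := fun h => by simp [h] at hl
  set f : ℕ → X := fun m => ∑ j ∈ Finset.range m, l ^ (m - 1 - j) • (Tc ^ j) b with hf
  have hfrec : ∀ m : ℕ, f (m + 1) = Tc (f m) + l ^ m • b := by
    intro m
    have h1 : f (m+1) = ∑ j ∈ Finset.range m, l ^ (m - 1 - j) • (Tc ^ (j+1)) b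
        + l ^ m • (Tc ^ 0) b := by
      show ∑ j ∈ Finset.range (m+1), l ^ (m + 1 - 1 - j) • (Tc ^ j) b = _
      rw [Finset.sum_range_succ']
      congr 1
      · refine Finset.sum_congr rfl fun j hj => ?_
        congr 2
        omega
    rw [h1]
    have h2 : Tc (f m) = ∑ j ∈ Finset.range m, l ^ (m - 1 - j) • (Tc ^ (j+1)) b := by
      rw [hf, map_sum]
      refine Finset.sum_congr rfl fun j hj => ?_
      rw [map_smul, pow_succ' Tc j, ContinuousLinearMap.mul_apply]
    rw [h2]
    simp
  -- pseudo-orbit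
  have hx : ∀ n : ℤ, ‖(fun n : ℤ => f n.toNat) (n+1) - Tc ((fun n : ℤ => f n.toNat) n)‖ ≤ δ := by
    intro n
    rcases le_or_gt 0 n with h | h
    · have h1 : (n+1).toNat = n.toNat + 1 := by omega
      simp only [h1, hfrec]
      rw [add_sub_cancel_left, norm_smul, norm_pow, hl]
      simpa using hb
    · have h1 : (n+1).toNat = 0 := by omega
      have h2 : n.toNat = 0 := by omega
      show ‖f (n+1).toNat - Tc (f n.toNat)‖ ≤ δ
      rw [h1, h2]
      simp [hf, hδ.le]
  obtain ⟨y, hy⟩ := hsh (fun n : ℤ => f n.toNat) hx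
  have hyg : ∀ m : ℕ, ‖f m - (Tc ^ m) y‖ ≤ 1 := by
    intro m
    have h := hy (m : ℤ)
    rw [zpow_natCast] at h
    simpa [Int.toNat_natCast, hTc, Units.val_pow_eq_pow_val] using h
  set d : ℕ → X := fun m => f m - (Tc ^ m) y with hd
  have hdA : ∀ m : ℕ, A (d m) = l • d m - d (m+1) + l ^ m • b := by
    intro m
    have hpow : (Tc ^ (m+1)) y = Tc ((Tc ^ m) y) := by
      rw [pow_succ' Tc m, ContinuousLinearMap.mul_apply]
    have h1 : Tc (d m) = d (m+1) - l ^ m • b := by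
      show Tc (f m - (Tc ^ m) y) = (f (m+1) - (Tc ^ (m+1)) y) - l ^ m • b
      rw [map_sub, hfrec m, hpow]
      abel
    have h2 : A (d m) = l • d m - Tc (d m) := by
      rw [hA]
      simp
    rw [h2, h1]
    abel
  set c : ℕ → X := fun m => (l⁻¹) ^ m • d m with hc
  have hcnorm : ∀ m : ℕ, ‖c m‖ ≤ 1 := by
    intro m
    rw [hc]
    simp only [norm_smul, norm_pow, norm_inv, hl, inv_one, one_pow, one_mul]
    exact hyg m
  have hcA : ∀ m : ℕ, A (c m) = l • (c m - c (m+1)) + b := by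
    intro m
    have s2 : l * l⁻¹ ^ (m+1) = l⁻¹ ^ m := by
      rw [pow_succ']
      field_simp
    have s3 : l⁻¹ ^ m * l ^ m = 1 := by
      rw [← mul_pow, inv_mul_cancel₀ hl0, one_pow]
    have h1 : A (c m) = l⁻¹ ^ m • A (d m) := by rw [hc, map_smul]
    rw [h1, hdA m]
    simp only [hc, hd]
    match_scalars <;> field_simp <;> ring_nf <;> simp [hl0]
  set v : X := (N : ℂ)⁻¹ • ∑ m ∈ Finset.range N, c m with hv
  have hsum : ∑ m ∈ Finset.range N, A (c m) = l • (c 0 - c N) + (N : ℂ) • b := by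
    calc ∑ m ∈ Finset.range N, A (c m)
        = ∑ m ∈ Finset.range N, (l • (c m - c (m+1)) + b) :=
          Finset.sum_congr rfl fun m _ => hcA m
      _ = l • ∑ m ∈ Finset.range N, (c m - c (m+1)) + (N : ℂ) • b := by
          rw [Finset.sum_add_distrib, Finset.smul_sum, Finset.sum_const,
            Finset.card_range, Nat.cast_smul_eq_nsmul]
      _ = l • (c 0 - c N) + (N : ℂ) • b := by rw [Finset.sum_range_sub']
  have hNc : (N : ℂ) ≠ 0 := Nat.cast_ne_zero.mpr hN.ne'
  have hAv : A v - b = (N : ℂ)⁻¹ • (l • (c 0 - c N)) := by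
    rw [hv, map_smul, map_sum, hsum, smul_add, smul_smul (N:ℂ)⁻¹ (N:ℂ) b,
      inv_mul_cancel₀ hNc, one_smul]
    abel
  refine ⟨v, ?_, ?_⟩
  · rw [hv, norm_smul]
    calc ‖(N : ℂ)⁻¹‖ * ‖∑ m ∈ Finset.range N, c m‖
        ≤ (N : ℝ)⁻¹ * (N * 1) := by
          refine mul_le_mul ?_ ?_ (norm_nonneg _) (by positivity)
          · simp
          · refine (norm_sum_le _ _).trans ?_
            calc ∑ m ∈ Finset.range N, ‖c m‖ ≤ ∑ _m ∈ Finset.range N, (1:ℝ) :=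
                  Finset.sum_le_sum fun m _ => hcnorm m
              _ = N * 1 := by simp
      _ = 1 := by
          field_simp
  · rw [hAv, norm_smul, norm_smul]
    have hN' : (0:ℝ) < N := Nat.cast_pos.mpr hN
    calc ‖(N : ℂ)⁻¹‖ * (‖l‖ * ‖c 0 - c N‖) ≤ (N : ℝ)⁻¹ * (1 * 2) := by
          refine mul_le_mul ?_ ?_ (by positivity) (by positivity)
          · simp
          · rw [hl]
            refine mul_le_mul le_rfl ?_ (norm_nonneg _) one_pos.le
            calc ‖c 0 - c N‖ ≤ ‖c 0‖ + ‖c N‖ := norm_sub_le _ _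
              _ ≤ 1 + 1 := add_le_add (hcnorm 0) (hcnorm N)
              _ = 2 := by norm_num
      _ = 2 / N := by rw [one_mul]; field_simp

/-- If an invertible operator `T` on a complex Hilbert space has the shadowing property,
then for every `λ` on the unit circle the operator `λI - T` has a bounded linear right
inverse (i.e. no unimodular `λ` belongs to the right spectrum of `T`). -/
theorem rightInvertible_of_shadowing (T : (X →L[ℂ] X)ˣ)
    (hT : ShadowingProperty T) :
    ∀ l : ℂ, ‖l‖ = 1 →
      ∃ S : X →L[ℂ] X, (l • (1 : X →L[ℂ] X) - (T : X →L[ℂ] X)) * S = 1 := by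
  intro l hl
  obtain ⟨δ, hδ, happ⟩ := approx_solve T hT hl
  set A : X →L[ℂ] X := l • (1 : X →L[ℂ] X) - (T : X →L[ℂ] X) with hA
  set A' : X →L[ℂ] X := ContinuousLinearMap.adjoint A with hA'
  -- Step 2: the adjoint is bounded below
  have hlow : ∀ x : X, δ * ‖x‖ ≤ ‖A' x‖ := by
    intro x
    rcases eq_or_ne x 0 with rfl | hx0
    · simp
    have hxpos : (0:ℝ) < ‖x‖ := norm_pos_iff.mpr hx0
    refine le_of_forall_pos_le_add fun ε hε => ?_
    obtain ⟨N, hNgt⟩ := exists_nat_gt (2 * ‖x‖ / ε)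
    have hNpos : 0 < N := Nat.cast_pos.mp (lt_of_le_of_lt (by positivity) hNgt)
    set b : X := ((δ / ‖x‖ : ℝ) : ℂ) • x with hb
    have hbnorm : ‖b‖ = δ := by
      rw [hb, norm_smul, Complex.norm_real, Real.norm_of_nonneg (by positivity)]
      field_simp
    obtain ⟨v, hv1, hv2⟩ := happ b hbnorm.le N hNpos
    have hinner : (inner ℂ b x : ℂ) = ((δ * ‖x‖ : ℝ) : ℂ) := by
      have hxC : ((‖x‖:ℝ):ℂ) ≠ 0 := by
        exact_mod_cast hxpos.ne'
      rw [hb, inner_smul_left, Complex.conj_ofReal, inner_self_eq_norm_sq_to_K]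
      push_cast
      field_simp
      rfl
    have h1 : δ * ‖x‖ = ‖(inner ℂ b x : ℂ)‖ := by
      rw [hinner, Complex.norm_real, Real.norm_of_nonneg (by positivity)]
    have h2 : (inner ℂ b x : ℂ) = inner ℂ (b - A v) x + inner ℂ (A v) x := by
      rw [inner_sub_left]; ring
    have h3 : ‖(inner ℂ (A v) x : ℂ)‖ ≤ ‖A' x‖ := by
      have he : (inner ℂ (A v) x : ℂ) = inner ℂ v (A' x) := by
        rw [hA', ContinuousLinearMap.adjoint_inner_right]
      rw [he]
      calc ‖(inner ℂ v (A' x) : ℂ)‖ ≤ ‖v‖ * ‖A' x‖ := norm_inner_le_norm _ _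
        _ ≤ 1 * ‖A' x‖ := by gcongr
        _ = ‖A' x‖ := one_mul _
    have h4 : ‖(inner ℂ (b - A v) x : ℂ)‖ ≤ (2 / N) * ‖x‖ := by
      calc ‖(inner ℂ (b - A v) x : ℂ)‖ ≤ ‖b - A v‖ * ‖x‖ := norm_inner_le_norm _ _
        _ ≤ (2 / N) * ‖x‖ := by
            rw [norm_sub_rev]
            gcongr
    have h5 : (2 / (N:ℝ)) * ‖x‖ ≤ ε := by
      rw [div_lt_iff₀ hε] at hNgt
      have hN' : (0:ℝ) < N := Nat.cast_pos.mpr hNpos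
      rw [div_mul_eq_mul_div, div_le_iff₀ hN']
      nlinarith
    calc δ * ‖x‖ = ‖(inner ℂ b x : ℂ)‖ := h1
      _ ≤ ‖(inner ℂ (b - A v) x : ℂ)‖ + ‖(inner ℂ (A v) x : ℂ)‖ := by
          rw [h2]; exact norm_add_le _ _
      _ ≤ (2 / N) * ‖x‖ + ‖A' x‖ := add_le_add h4 h3
      _ ≤ ε + ‖A' x‖ := by gcongr
      _ = ‖A' x‖ + ε := add_comm _ _
  -- Step 3: B = A ∘ A' is bijective
  set B : X →L[ℂ] X := A ∘L A' with hB
  have hBx : ∀ x : X, (inner ℂ (B x) x : ℂ) = ((‖A' x‖^2 : ℝ) : ℂ) := by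
    intro x
    have : (inner ℂ (A' x) (A' x) : ℂ) = inner ℂ (A (A' x)) x :=
      ContinuousLinearMap.adjoint_inner_right A (A' x) x
    rw [hB, ContinuousLinearMap.comp_apply, ← this, inner_self_eq_norm_sq_to_K]
    norm_cast
  have hBlow : ∀ x : X, δ^2 * ‖x‖ ≤ ‖B x‖ := by
    intro x
    rcases eq_or_ne x 0 with rfl | hx0
    · simp
    have hxpos : (0:ℝ) < ‖x‖ := norm_pos_iff.mpr hx0
    have h1 : δ^2 * ‖x‖^2 ≤ ‖A' x‖^2 := by
      have h := mul_self_le_mul_self (by positivity : (0:ℝ) ≤ δ * ‖x‖) (hlow x)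
      nlinarith [h]
    have h2 : ‖A' x‖^2 ≤ ‖B x‖ * ‖x‖ := by
      have h3 := norm_inner_le_norm (𝕜 := ℂ) (B x) x
      have h4 : ‖(inner ℂ (B x) x : ℂ)‖ = ‖A' x‖^2 := by
        rw [hBx x, Complex.norm_real, Real.norm_of_nonneg (by positivity)]
      rwa [h4] at h3
    nlinarith
  have hker : LinearMap.ker (B : X →ₗ[ℂ] X) = ⊥ := by
    refine LinearMap.ker_eq_bot'.mpr fun x hx => ?_
    have h := hBlow x
    rw [show B x = 0 from hx, norm_zero] at h
    have : ‖x‖ ≤ 0 := by nlinarith [pow_pos hδ 2]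
    exact norm_le_zero_iff.mp this
  have hanti : AntilipschitzWith ⟨(δ^2)⁻¹, by positivity⟩ B := by
    refine ContinuousLinearMap.antilipschitz_of_bound B fun x => ?_
    have h := hBlow x
    show ‖x‖ ≤ (δ^2)⁻¹ * ‖B x‖
    rw [inv_mul_eq_div, le_div_iff₀ (by positivity)]
    linarith [hBlow x]
  have hrange : LinearMap.range (B : X →ₗ[ℂ] X) = ⊤ := by
    have hKc : IsClosed ((LinearMap.range (B : X →ₗ[ℂ] X) : Submodule ℂ X) : Set X) := by
      have : ((LinearMap.range (B : X →ₗ[ℂ] X) : Submodule ℂ X) : Set X) = Set.range B :=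
        LinearMap.coe_range _
      rw [this]
      exact hanti.isClosed_range B.uniformContinuous
    haveI : CompleteSpace (LinearMap.range (B : X →ₗ[ℂ] X) : Submodule ℂ X) := hKc.completeSpace_coe
    rw [← Submodule.orthogonal_eq_bot_iff, Submodule.eq_bot_iff]
    intro z hz
    have hz' : (inner ℂ (B z) z : ℂ) = 0 :=
      hz (B z) (LinearMap.mem_range_self (B : X →ₗ[ℂ] X) z)
    rw [hBx z] at hz'
    have hz2 : ‖A' z‖ = 0 := by
      have := Complex.ofReal_eq_zero.mp hz'
      nlinarith [norm_nonneg (A' z)]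
    have := hlow z
    rw [hz2] at this
    have : ‖z‖ ≤ 0 := by nlinarith [hδ]
    exact norm_le_zero_iff.mp this
  set e := ContinuousLinearEquiv.ofBijective B hker hrange with he
  refine ⟨A' ∘L (e.symm : X →L[ℂ] X), ?_⟩
  ext x
  have h1 : (A * (A' ∘L (e.symm : X →L[ℂ] X))) x = B ((e.symm : X →L[ℂ] X) x) := rfl
  rw [hA] at h1
  rw [h1]
  have h2 := ContinuousLinearEquiv.ofBijective_apply_symm_apply B hker hrange x
  simpa [he] using h2
end
end

section
/- Let X be a complex Hilbert space and let T be an invertible bounded linear operator on X. Define the bounded linear operator 𝒮 on ℓ∞(ℤ, X) by 𝒮((x_n)_{n∈ℤ}) = (x_{n+1} − T x_n)_{n∈ℤ}, and the bounded linear operator ℬ on ℓ¹(ℤ, X) by ℬ((y_n)_{n∈ℤ}) = (y_{n−1} − T* y_n)_{n∈ℤ}. Then 𝒮 is surjective if and only if ℬ is bounded below. -/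
open Filter Topology

noncomputable section

open scoped InnerProductSpace

variable {X : Type*} [NormedAddCommGroup X] [InnerProductSpace ℂ X] [CompleteSpace X]

namespace SurjBBAux

lemma summable_norm (y : lp (fun _ : ℤ => X) 1) :
    Summable fun n => ‖(y : ∀ _ : ℤ, X) n‖ := by
  have := (lp.memℓp y).summable (p := 1) (by norm_num)
  simpa using this

lemma norm_eq_tsum (y : lp (fun _ : ℤ => X) 1) :
    ‖y‖ = ∑' n, ‖(y : ∀ _ : ℤ, X) n‖ := by
  have := lp.norm_eq_tsum_rpow (p := 1) (by norm_num) y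
  simpa using this

lemma summable_of_le (y : lp (fun _ : ℤ => X) 1) {f : ℤ → ℂ} (C : ℝ)
    (h : ∀ n, ‖f n‖ ≤ C * ‖(y : ∀ _ : ℤ, X) n‖) : Summable f :=
  Summable.of_norm_bounded ((summable_norm y).mul_left C) h

lemma summable_pairing (x : lp (fun _ : ℤ => X) ⊤) (y : lp (fun _ : ℤ => X) 1) :
    Summable fun n => (inner ℂ ((x : ∀ _ : ℤ, X) n) ((y : ∀ _ : ℤ, X) n) : ℂ) :=
  summable_of_le y ‖x‖ fun n =>
    (norm_inner_le_norm _ _).trans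
      (by gcongr; exact lp.norm_apply_le_norm ENNReal.top_ne_zero x n)

lemma pairing_bound (x : lp (fun _ : ℤ => X) ⊤) (y : lp (fun _ : ℤ => X) 1) :
    ‖∑' n, (inner ℂ ((x : ∀ _ : ℤ, X) n) ((y : ∀ _ : ℤ, X) n) : ℂ)‖ ≤ ‖x‖ * ‖y‖ := by
  have hy : HasSum (fun n => ‖x‖ * ‖(y : ∀ _ : ℤ, X) n‖) (‖x‖ * ‖y‖) := by
    rw [norm_eq_tsum y]
    exact (summable_norm y).hasSum.mul_left ‖x‖
  refine tsum_of_norm_bounded hy fun n => ?_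
  exact (norm_inner_le_norm _ _).trans
    (by gcongr; exact lp.norm_apply_le_norm ENNReal.top_ne_zero x n)

/-- The pairing `ℓ∞(ℤ, X) → (ℓ¹(ℤ, X))*`. -/
def pairing (x : lp (fun _ : ℤ => X) ⊤) : lp (fun _ : ℤ => X) 1 →L[ℂ] ℂ :=
  LinearMap.mkContinuous
    { toFun := fun y => ∑' n, (inner ℂ ((x : ∀ _ : ℤ, X) n) ((y : ∀ _ : ℤ, X) n) : ℂ)
      map_add' := fun y z => by
        simp only [lp.coeFn_add, Pi.add_apply, inner_add_right]
        exact Summable.tsum_add (summable_pairing x y) (summable_pairing x z)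
      map_smul' := fun c y => by
        simp only [lp.coeFn_smul, Pi.smul_apply, inner_smul_right, RingHom.id_apply]
        exact tsum_mul_left }
    ‖x‖ (fun y => pairing_bound x y)

lemma pairing_apply (x : lp (fun _ : ℤ => X) ⊤) (y : lp (fun _ : ℤ => X) 1) :
    pairing x y = ∑' n, (inner ℂ ((x : ∀ _ : ℤ, X) n) ((y : ∀ _ : ℤ, X) n) : ℂ) := rfl

lemma pairing_single (x : lp (fun _ : ℤ => X) ⊤) (n : ℤ) (v : X) :
    pairing x (lp.single 1 n v) = (inner ℂ ((x : ∀ _ : ℤ, X) n) v : ℂ) := by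
  rw [pairing_apply]
  rw [tsum_eq_single n (fun m hm => by
    simp [lp.single_apply, hm])]
  simp [lp.single_apply]


/-- Intertwining: `pairing (Sop x) = (pairing x) ∘ Bop`. -/
lemma pairing_intertwine (T : (X →L[ℂ] X)ˣ)
    (Sop : lp (fun _ : ℤ => X) ⊤ →L[ℂ] lp (fun _ : ℤ => X) ⊤)
    (Bop : lp (fun _ : ℤ => X) 1 →L[ℂ] lp (fun _ : ℤ => X) 1)
    (hS : ∀ (x : lp (fun _ : ℤ => X) ⊤) (n : ℤ),
      (Sop x : ∀ _ : ℤ, X) n = (x : ∀ _ : ℤ, X) (n + 1) -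
        (T : X →L[ℂ] X) ((x : ∀ _ : ℤ, X) n))
    (hB : ∀ (y : lp (fun _ : ℤ => X) 1) (n : ℤ),
      (Bop y : ∀ _ : ℤ, X) n = (y : ∀ _ : ℤ, X) (n - 1) -
        (ContinuousLinearMap.adjoint (T : X →L[ℂ] X)) ((y : ∀ _ : ℤ, X) n))
    (x : lp (fun _ : ℤ => X) ⊤) (y : lp (fun _ : ℤ => X) 1) :
    pairing (Sop x) y = pairing x (Bop y) := by
  set Tc := (T : X →L[ℂ] X)
  set Ta := ContinuousLinearMap.adjoint Tc
  have hxn : ∀ n, ‖(x : ∀ _ : ℤ, X) n‖ ≤ ‖x‖ :=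
    fun n => lp.norm_apply_le_norm ENNReal.top_ne_zero x n
  have hg : Summable fun n => (inner ℂ ((x : ∀ _ : ℤ, X) n) (Ta ((y : ∀ _ : ℤ, X) n)) : ℂ) := by
    refine summable_of_le y (‖x‖ * ‖Ta‖) fun n => ?_
    calc ‖(inner ℂ ((x : ∀ _ : ℤ, X) n) (Ta ((y : ∀ _ : ℤ, X) n)) : ℂ)‖
        ≤ ‖(x : ∀ _ : ℤ, X) n‖ * ‖Ta ((y : ∀ _ : ℤ, X) n)‖ := norm_inner_le_norm _ _
      _ ≤ ‖x‖ * (‖Ta‖ * ‖(y : ∀ _ : ℤ, X) n‖) := by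
          exact mul_le_mul (hxn n) (Ta.le_opNorm _) (norm_nonneg _) (norm_nonneg _)
      _ = ‖x‖ * ‖Ta‖ * ‖(y : ∀ _ : ℤ, X) n‖ := by ring
  have hf : Summable fun n => (inner ℂ ((x : ∀ _ : ℤ, X) (n + 1)) ((y : ∀ _ : ℤ, X) n) : ℂ) := by
    refine summable_of_le y ‖x‖ fun n => ?_
    exact (norm_inner_le_norm _ _).trans (by gcongr; exact hxn _)
  have hshift : (∑' n, (inner ℂ ((x : ∀ _ : ℤ, X) (n + 1)) ((y : ∀ _ : ℤ, X) n) : ℂ))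
      = ∑' n, (inner ℂ ((x : ∀ _ : ℤ, X) n) ((y : ∀ _ : ℤ, X) (n - 1)) : ℂ) := by
    have := Equiv.tsum_eq (Equiv.addRight (1 : ℤ))
      (fun n => (inner ℂ ((x : ∀ _ : ℤ, X) n) ((y : ∀ _ : ℤ, X) (n - 1)) : ℂ))
    rw [← this]
    refine tsum_congr fun n => ?_
    simp [Equiv.coe_addRight]
  have hf' : Summable fun n => (inner ℂ ((x : ∀ _ : ℤ, X) n) ((y : ∀ _ : ℤ, X) (n - 1)) : ℂ) := by
    have := hf.comp_injective (Equiv.subRight (1 : ℤ)).injective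
    refine this.congr fun n => ?_
    simp [Equiv.subRight_apply, sub_add_cancel]
  rw [pairing_apply, pairing_apply]
  calc (∑' n, (inner ℂ ((Sop x : ∀ _ : ℤ, X) n) ((y : ∀ _ : ℤ, X) n) : ℂ))
      = ∑' n, ((inner ℂ ((x : ∀ _ : ℤ, X) (n + 1)) ((y : ∀ _ : ℤ, X) n) : ℂ)
          - inner ℂ ((x : ∀ _ : ℤ, X) n) (Ta ((y : ∀ _ : ℤ, X) n))) := by
        refine tsum_congr fun n => ?_
        rw [hS x n, inner_sub_left, ContinuousLinearMap.adjoint_inner_right]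
    _ = (∑' n, (inner ℂ ((x : ∀ _ : ℤ, X) (n + 1)) ((y : ∀ _ : ℤ, X) n) : ℂ))
          - ∑' n, (inner ℂ ((x : ∀ _ : ℤ, X) n) (Ta ((y : ∀ _ : ℤ, X) n)) : ℂ) := Summable.tsum_sub hf hg
    _ = (∑' n, (inner ℂ ((x : ∀ _ : ℤ, X) n) ((y : ∀ _ : ℤ, X) (n - 1)) : ℂ))
          - ∑' n, (inner ℂ ((x : ∀ _ : ℤ, X) n) (Ta ((y : ∀ _ : ℤ, X) n)) : ℂ) := by rw [hshift]
    _ = ∑' n, ((inner ℂ ((x : ∀ _ : ℤ, X) n) ((y : ∀ _ : ℤ, X) (n - 1)) : ℂ)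
          - inner ℂ ((x : ∀ _ : ℤ, X) n) (Ta ((y : ∀ _ : ℤ, X) n))) := (Summable.tsum_sub hf' hg).symm
    _ = ∑' n, (inner ℂ ((x : ∀ _ : ℤ, X) n) ((Bop y : ∀ _ : ℤ, X) n) : ℂ) := by
        refine tsum_congr fun n => ?_
        rw [hB y n, inner_sub_right]


/-- The "sign vector" attaining the `ℓ¹` norm of `y` through the pairing. -/
lemma exists_sign_vector (y : lp (fun _ : ℤ => X) 1) :
    ∃ b : lp (fun _ : ℤ => X) ⊤, ‖b‖ ≤ 1 ∧ pairing b y = (‖y‖ : ℂ) := by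
  set bf : ∀ _ : ℤ, X := fun n => ((‖(y : ∀ _ : ℤ, X) n‖ : ℂ))⁻¹ • (y : ∀ _ : ℤ, X) n with hbf
  have hbound : ∀ n, ‖bf n‖ ≤ 1 := by
    intro n
    rcases eq_or_ne ((y : ∀ _ : ℤ, X) n) 0 with h | h
    · simp [hbf, h]
    · have hn : (0:ℝ) < ‖(y : ∀ _ : ℤ, X) n‖ := norm_pos_iff.2 h
      rw [hbf]
      simp only [norm_smul, norm_inv, Complex.norm_real, Real.norm_eq_abs,
        abs_of_nonneg (norm_nonneg _)]
      rw [inv_mul_cancel₀ hn.ne']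
  have hmem : Memℓp bf ⊤ := memℓp_infty ⟨1, by
    rintro r ⟨n, rfl⟩; exact hbound n⟩
  refine ⟨⟨bf, hmem⟩, ?_, ?_⟩
  · exact lp.norm_le_of_forall_le zero_le_one hbound
  · have hinner : ∀ n, (inner ℂ (bf n) ((y : ∀ _ : ℤ, X) n) : ℂ) = (‖(y : ∀ _ : ℤ, X) n‖ : ℂ) := by
      intro n
      rcases eq_or_ne ((y : ∀ _ : ℤ, X) n) 0 with h | h
      · simp [hbf, h]
      · have hn : (0:ℝ) < ‖(y : ∀ _ : ℤ, X) n‖ := norm_pos_iff.2 h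
        rw [hbf]
        simp only [inner_smul_left, map_inv₀, Complex.conj_ofReal]
        rw [inner_self_eq_norm_sq_to_K, pow_two]
        exact inv_mul_cancel_left₀ (RCLike.ofReal_ne_zero.mpr hn.ne') _
    rw [pairing_apply]
    have h1 : HasSum (fun n => ((‖(y : ∀ _ : ℤ, X) n‖ : ℂ))) ((‖y‖ : ℂ)) := by
      have := (summable_norm y).hasSum
      rw [norm_eq_tsum y]
      exact this.mapL Complex.ofRealCLM
    rw [tsum_congr hinner]
    exact h1.tsum_eq

/-- Riesz-type surjectivity of the pairing onto the dual of `ℓ¹(ℤ, X)`. -/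
lemma pairing_surjective (g : lp (fun _ : ℤ => X) 1 →L[ℂ] ℂ) :
    ∃ x : lp (fun _ : ℤ => X) ⊤, ‖x‖ ≤ ‖g‖ ∧ pairing x = g := by
  have hsingle : ∀ (n : ℤ) (v : X), ‖(lp.single 1 n v : lp (fun _ : ℤ => X) 1)‖ = ‖v‖ := by
    intro n v
    simpa using lp.norm_single (p := 1) (by norm_num) (fun _ : ℤ => v) n
  set φ : ℤ → (X →L[ℂ] ℂ) := fun n =>
    LinearMap.mkContinuous
      { toFun := fun v => g (lp.single 1 n v)
        map_add' := fun v w => by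
          show g (lp.single 1 n (v + w)) = g (lp.single 1 n v) + g (lp.single 1 n w)
          have : (lp.single 1 n (v + w) : lp (fun _ : ℤ => X) 1)
              = lp.single 1 n v + lp.single 1 n w := by
            refine lp.ext (funext fun j => ?_)
            by_cases h : j = n
            · subst h; simp [lp.single_apply]
            · simp [lp.single_apply, h]
          rw [this, map_add]
        map_smul' := fun c v => by
          show g (lp.single 1 n (c • v)) = c • g (lp.single 1 n v)
          rw [
            lp.single_smul (E := fun _ : ℤ => X) 1 n c v, map_smul] }
      ‖g‖ (fun v => by
        calc ‖g (lp.single 1 n v)‖ ≤ ‖g‖ * ‖(lp.single 1 n v : lp (fun _ : ℤ => X) 1)‖ :=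
              g.le_opNorm _
          _ = ‖g‖ * ‖v‖ := by rw [hsingle n v]) with hφ
  have hφ_apply : ∀ n v, φ n v = g (lp.single 1 n v) := fun n v => rfl
  have hφ_norm : ∀ n, ‖φ n‖ ≤ ‖g‖ := fun n =>
    LinearMap.mkContinuous_norm_le _ (norm_nonneg g) _
  set xf : ∀ _ : ℤ, X := fun n => (InnerProductSpace.toDual ℂ X).symm (φ n) with hxf
  have hxf_norm : ∀ n, ‖xf n‖ ≤ ‖g‖ := fun n => by
    rw [hxf]; simpa using hφ_norm n
  have hmem : Memℓp xf ⊤ := memℓp_infty ⟨‖g‖, by rintro r ⟨n, rfl⟩; exact hxf_norm n⟩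
  refine ⟨⟨xf, hmem⟩, lp.norm_le_of_forall_le (norm_nonneg g) hxf_norm, ?_⟩
  ext y
  rw [pairing_apply]
  have hsum : HasSum (fun n => lp.single 1 n ((y : ∀ _ : ℤ, X) n)) y :=
    lp.hasSum_single (by norm_num) y
  have hsum2 : HasSum (fun n => g (lp.single 1 n ((y : ∀ _ : ℤ, X) n))) (g y) :=
    hsum.mapL g
  rw [tsum_congr (fun n => ?_)]
  · exact hsum2.tsum_eq
  · show (inner ℂ (xf n) ((y : ∀ _ : ℤ, X) n) : ℂ) = g (lp.single 1 n ((y : ∀ _ : ℤ, X) n))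
    rw [hxf]
    rw [InnerProductSpace.toDual_symm_apply]
    exact hφ_apply n _

/-- The pairing separates points of `ℓ∞`. -/
lemma pairing_inj {x w : lp (fun _ : ℤ => X) ⊤}
    (h : ∀ y, pairing x y = pairing w y) : x = w := by
  ext n
  refine ext_inner_right ℂ fun v => ?_
  have := h (lp.single 1 n v)
  rwa [pairing_single, pairing_single] at this

end SurjBBAux

/-- If `𝒮` is the operator `(x_n) ↦ (x_{n+1} - T x_n)` on `ℓ∞(ℤ, X)` and `ℬ` is the
operator `(y_n) ↦ (y_{n-1} - T* y_n)` on `ℓ¹(ℤ, X)`, then `𝒮` is surjective if and only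
if `ℬ` is bounded below. -/
theorem surjective_iff_boundedBelow (T : (X →L[ℂ] X)ˣ)
    (Sop : lp (fun _ : ℤ => X) ⊤ →L[ℂ] lp (fun _ : ℤ => X) ⊤)
    (Bop : lp (fun _ : ℤ => X) 1 →L[ℂ] lp (fun _ : ℤ => X) 1)
    (hS : ∀ (x : lp (fun _ : ℤ => X) ⊤) (n : ℤ),
      (Sop x : ∀ _ : ℤ, X) n = (x : ∀ _ : ℤ, X) (n + 1) -
        (T : X →L[ℂ] X) ((x : ∀ _ : ℤ, X) n))
    (hB : ∀ (y : lp (fun _ : ℤ => X) 1) (n : ℤ),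
      (Bop y : ∀ _ : ℤ, X) n = (y : ∀ _ : ℤ, X) (n - 1) -
        (ContinuousLinearMap.adjoint (T : X →L[ℂ] X)) ((y : ∀ _ : ℤ, X) n)) :
    Function.Surjective Sop ↔ ∃ α > (0 : ℝ), ∀ y, α * ‖y‖ ≤ ‖Bop y‖ := by
  open SurjBBAux in
  constructor
  · -- surjective ⟹ bounded below
    intro hsurj
    obtain ⟨C, hC, hpre⟩ := Sop.exists_preimage_norm_le hsurj
    refine ⟨C⁻¹, inv_pos.2 hC, fun y => ?_⟩
    obtain ⟨b, hb1, hby⟩ := exists_sign_vector y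
    obtain ⟨x, hxb, hxn⟩ := hpre b
    have hxC : ‖x‖ ≤ C := by
      calc ‖x‖ ≤ C * ‖b‖ := hxn
        _ ≤ C * 1 := by gcongr
        _ = C := mul_one C
    have key : ‖y‖ ≤ C * ‖Bop y‖ := by
      have h1 : (‖y‖ : ℂ) = pairing x (Bop y) := by
        rw [← pairing_intertwine T Sop Bop hS hB x y, hxb, hby]
      calc ‖y‖ = ‖((‖y‖ : ℝ) : ℂ)‖ := by
            rw [Complex.norm_real, Real.norm_of_nonneg (norm_nonneg y)]
        _ = ‖pairing x (Bop y)‖ := by rw [h1]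
        _ ≤ ‖x‖ * ‖Bop y‖ := pairing_bound x (Bop y)
        _ ≤ C * ‖Bop y‖ := by gcongr
    rw [inv_mul_le_iff₀ hC]
    exact key
  · -- bounded below ⟹ surjective
    rintro ⟨α, hα, hbb⟩ b
    set g := pairing b with hg
    -- the range of Bop
    have hinj : Function.Injective (Bop : lp (fun _ : ℤ => X) 1 →ₗ[ℂ]
        lp (fun _ : ℤ => X) 1) := by
      intro y z hyz
      have h0 : Bop (y - z) = 0 := by
        simp only [map_sub]
        rw [show (Bop : lp (fun _ : ℤ => X) 1 →ₗ[ℂ] lp (fun _ : ℤ => X) 1) y = Bop y from rfl,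
          show (Bop : lp (fun _ : ℤ => X) 1 →ₗ[ℂ] lp (fun _ : ℤ => X) 1) z = Bop z from rfl] at hyz
        rw [hyz, sub_self]
      have := hbb (y - z)
      rw [h0, norm_zero] at this
      have : ‖y - z‖ ≤ 0 := by nlinarith [norm_nonneg (y - z)]
      have : y - z = 0 := by
        rw [← norm_le_zero_iff]
        exact this
      exact sub_eq_zero.1 this
    set R : Submodule ℂ (lp (fun _ : ℤ => X) 1) :=
      LinearMap.range (Bop : lp (fun _ : ℤ => X) 1 →ₗ[ℂ] lp (fun _ : ℤ => X) 1) with hR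
    set e := LinearEquiv.ofInjective
      (Bop : lp (fun _ : ℤ => X) 1 →ₗ[ℂ] lp (fun _ : ℤ => X) 1) hinj with he
    set h₀ : R →ₗ[ℂ] ℂ := g.toLinearMap.comp (e.symm.toLinearMap) with hh0
    have hbound : ∀ r : R, ‖h₀ r‖ ≤ (‖g‖ / α) * ‖r‖ := by
      intro r
      set y := e.symm r with hy
      have hry : (r : lp (fun _ : ℤ => X) 1) = Bop y := by
        have : e y = r := by rw [hy, LinearEquiv.apply_symm_apply]
        rw [← this]
        rfl
      have h₀r : h₀ r = g y := rfl
      calc ‖h₀ r‖ = ‖g y‖ := by rw [h₀r]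
        _ ≤ ‖g‖ * ‖y‖ := g.le_opNorm y
        _ ≤ ‖g‖ * (α⁻¹ * ‖Bop y‖) := by
            gcongr
            exact (le_inv_mul_iff₀ hα).2 (hbb y)
        _ = (‖g‖ / α) * ‖Bop y‖ := by rw [div_eq_mul_inv]; ring
        _ = (‖g‖ / α) * ‖(r : lp (fun _ : ℤ => X) 1)‖ := by rw [hry]
        _ = (‖g‖ / α) * ‖r‖ := rfl
    set h : R →L[ℂ] ℂ := LinearMap.mkContinuous h₀ (‖g‖ / α) hbound with hh
    obtain ⟨gE, hext, -⟩ := exists_extension_norm_eq R h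
    obtain ⟨x, -, hx⟩ := pairing_surjective gE
    refine ⟨x, pairing_inj fun y => ?_⟩
    rw [pairing_intertwine T Sop Bop hS hB x y, hx]
    have hmem : Bop y ∈ R := ⟨y, rfl⟩
    have h1 : gE (Bop y) = h ⟨Bop y, hmem⟩ := hext ⟨Bop y, hmem⟩
    have h2 : h ⟨Bop y, hmem⟩ = g (e.symm ⟨Bop y, hmem⟩) := rfl
    have h3 : e.symm ⟨Bop y, hmem⟩ = y := by
      have : e y = ⟨Bop y, hmem⟩ := by
        apply Subtype.ext
        rfl
      rw [← this, LinearEquiv.symm_apply_apply]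
    rw [h1, h2, h3]
end
end

section
/- Let X be a complex Hilbert space and let T be an invertible bounded linear operator on X. Then T has the shadowing property if and only if the bounded linear operator 𝒮 on ℓ∞(ℤ, X) defined by 𝒮((x_n)_{n∈ℤ}) = (x_{n+1} − T x_n)_{n∈ℤ} is surjective; that is, if and only if for every bounded sequence (z_n)_{n∈ℤ} in X there exists a bounded sequence (x_n)_{n∈ℤ} in X with x_{n+1} = T x_n + z_n for all n ∈ ℤ. -/
open Filter Topology

noncomputable section

variable {X : Type*} [NormedAddCommGroup X] [InnerProductSpace ℂ X] [CompleteSpace X]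

section Aux

variable {Y : Type*} [NormedAddCommGroup Y] [NormedSpace ℂ Y]

/-- Forward half of the pseudo-orbit generated by `z`. -/
def fwdSeq (T : (Y →L[ℂ] Y)ˣ) (z : ℤ → Y) : ℕ → Y
  | 0 => 0
  | k + 1 => (T : Y →L[ℂ] Y) (fwdSeq T z k) + z k

/-- Backward half of the pseudo-orbit generated by `z`. -/
def bwdSeq (T : (Y →L[ℂ] Y)ˣ) (z : ℤ → Y) : ℕ → Y
  | 0 => 0
  | k + 1 => ((T⁻¹ : (Y →L[ℂ] Y)ˣ) : Y →L[ℂ] Y) (bwdSeq T z k - z (-(k + 1 : ℕ)))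

/-- The pseudo-orbit generated by `z`, with value `0` at `0`. -/
def pseudoOrbit (T : (Y →L[ℂ] Y)ˣ) (z : ℤ → Y) : ℤ → Y
  | Int.ofNat k => fwdSeq T z k
  | Int.negSucc k => bwdSeq T z (k + 1)

lemma pseudoOrbit_succ (T : (Y →L[ℂ] Y)ˣ) (z : ℤ → Y) (n : ℤ) :
    pseudoOrbit T z (n + 1) = (T : Y →L[ℂ] Y) (pseudoOrbit T z n) + z n := by
  have hinv : ∀ v : Y, (T : Y →L[ℂ] Y) (((T⁻¹ : (Y →L[ℂ] Y)ˣ) : Y →L[ℂ] Y) v) = v := by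
    intro v
    have h : ((T * T⁻¹ : (Y →L[ℂ] Y)ˣ) : Y →L[ℂ] Y) v = v := by
      rw [mul_inv_cancel]; rfl
    rw [Units.val_mul, ContinuousLinearMap.mul_apply] at h
    exact h
  rcases n with k | k
  · -- n = Int.ofNat k
    show pseudoOrbit T z (Int.ofNat (k + 1)) = _
    simp [pseudoOrbit, fwdSeq]
  · rcases k with _ | k
    · -- n = -1
      show pseudoOrbit T z 0 = _
      simp only [pseudoOrbit, bwdSeq, fwdSeq, hinv]
      have : z (-(0 + 1 : ℕ)) = z (Int.negSucc 0) := by congr 1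
      rw [this]; abel
    · -- n = Int.negSucc (k+1)
      show pseudoOrbit T z (Int.negSucc k) = _
      simp only [pseudoOrbit]
      show bwdSeq T z (k + 1) = _
      conv_rhs => rw [show (k + 1 + 1 : ℕ) = (k + 2 : ℕ) from rfl, bwdSeq, hinv]
      have : z (-(k + 1 + 1 : ℕ)) = z (Int.negSucc (k + 1)) := by congr 1
      rw [this]; abel

end Aux

section OpAux

variable (T : (X →L[ℂ] X)ˣ)

/-- The operator `(x_n) ↦ (x_{n+1} - T x_n)` on bounded functions `ℤ → X`. -/
def shadowOp : BoundedContinuousFunction ℤ X →L[ℂ] BoundedContinuousFunction ℤ X :=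
  LinearMap.mkContinuous
    { toFun := fun x => BoundedContinuousFunction.ofNormedAddCommGroup
        (fun n => x (n + 1) - (T : X →L[ℂ] X) (x n)) continuous_of_discreteTopology
        ((1 + ‖(T : X →L[ℂ] X)‖) * ‖x‖)
        (by
          intro n
          calc ‖x (n + 1) - (T : X →L[ℂ] X) (x n)‖
              ≤ ‖x (n + 1)‖ + ‖(T : X →L[ℂ] X) (x n)‖ := norm_sub_le _ _
            _ ≤ ‖x‖ + ‖(T : X →L[ℂ] X)‖ * ‖x‖ := by
                gcongr
                · exact x.norm_coe_le_norm _
                · exact ((T : X →L[ℂ] X).le_opNorm _).trans (by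
                    gcongr; exact x.norm_coe_le_norm _)
            _ = (1 + ‖(T : X →L[ℂ] X)‖) * ‖x‖ := by ring)
      map_add' := by
        intro x y
        ext n
        simp [BoundedContinuousFunction.coe_ofNormedAddCommGroup]
        abel
      map_smul' := by
        intro c x
        ext n
        simp [BoundedContinuousFunction.coe_ofNormedAddCommGroup, smul_sub] }
    (1 + ‖(T : X →L[ℂ] X)‖)
    (by
      intro x
      refine BoundedContinuousFunction.norm_ofNormedAddCommGroup_le _ (by positivity) ?_
      intro n
      calc ‖x (n + 1) - (T : X →L[ℂ] X) (x n)‖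
          ≤ ‖x (n + 1)‖ + ‖(T : X →L[ℂ] X) (x n)‖ := norm_sub_le _ _
        _ ≤ ‖x‖ + ‖(T : X →L[ℂ] X)‖ * ‖x‖ := by
            gcongr
            · exact x.norm_coe_le_norm _
            · exact ((T : X →L[ℂ] X).le_opNorm _).trans (by
                gcongr; exact x.norm_coe_le_norm _)
        _ = (1 + ‖(T : X →L[ℂ] X)‖) * ‖x‖ := by ring)

omit [CompleteSpace X] in
lemma shadowOp_apply (x : BoundedContinuousFunction ℤ X) (n : ℤ) :
    shadowOp T x n = x (n + 1) - (T : X →L[ℂ] X) (x n) := rfl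

end OpAux

/-- An invertible operator `T` on a complex Hilbert space has the shadowing property
if and only if the operator `(x_n) ↦ (x_{n+1} - T x_n)` on `ℓ∞(ℤ, X)` is surjective,
i.e. for every bounded sequence `(z_n)` there is a bounded sequence `(x_n)` with
`x_{n+1} = T x_n + z_n` for all `n`. -/
theorem shadowing_iff_surjective (T : (X →L[ℂ] X)ˣ) :
    ShadowingProperty T ↔
      ∀ z : ℤ → X, (∃ C : ℝ, ∀ n : ℤ, ‖z n‖ ≤ C) →
        ∃ x : ℤ → X, (∃ C : ℝ, ∀ n : ℤ, ‖x n‖ ≤ C) ∧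
          ∀ n : ℤ, x (n + 1) = (T : X →L[ℂ] X) (x n) + z n := by
  have hTsucc : ∀ (n : ℤ) (v : X),
      ((T ^ (n + 1) : (X →L[ℂ] X)ˣ) : X →L[ℂ] X) v
        = (T : X →L[ℂ] X) (((T ^ n : (X →L[ℂ] X)ˣ) : X →L[ℂ] X) v) := by
    intro n v
    have : (T ^ (n + 1) : (X →L[ℂ] X)ˣ) = T * T ^ n := by
      rw [add_comm, zpow_one_add]
    rw [this]
    rfl
  constructor
  · -- shadowing → surjectivity
    intro hsh z ⟨C, hC⟩
    by_cases hCpos : 0 < C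
    · obtain ⟨δ, hδ, hδp⟩ := hsh 1 one_pos
      set c : ℂ := ((δ / C : ℝ) : ℂ) with hc
      set z' : ℤ → X := fun n => c • z n with hz'
      set x' : ℤ → X := pseudoOrbit T z' with hx'
      have hkey : ∀ n : ℤ, x' (n + 1) - (T : X →L[ℂ] X) (x' n) = z' n := by
        intro n
        rw [hx', pseudoOrbit_succ]
        abel
      have hbd : ∀ n : ℤ, ‖x' (n + 1) - (T : X →L[ℂ] X) (x' n)‖ ≤ δ := by
        intro n
        rw [hkey n, hz']
        have : ‖c • z n‖ = (δ / C) * ‖z n‖ := by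
          rw [norm_smul, hc, Complex.norm_real, Real.norm_eq_abs,
            abs_of_pos (by positivity)]
        rw [this]
        calc (δ / C) * ‖z n‖ ≤ (δ / C) * C :=
              mul_le_mul_of_nonneg_left (hC n) (by positivity)
          _ = δ := by field_simp
      obtain ⟨y, hy⟩ := hδp x' hbd
      refine ⟨fun n => ((C / δ : ℝ) : ℂ) • (x' n - ((T ^ n : (X →L[ℂ] X)ˣ) : X →L[ℂ] X) y),
        ⟨C / δ, ?_⟩, ?_⟩
      · intro n
        rw [norm_smul, Complex.norm_real, Real.norm_eq_abs, abs_of_pos (by positivity)]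
        calc (C / δ) * ‖x' n - ((T ^ n : (X →L[ℂ] X)ˣ) : X →L[ℂ] X) y‖
            ≤ (C / δ) * 1 := mul_le_mul_of_nonneg_left (hy n) (by positivity)
          _ = C / δ := mul_one _
      · intro n
        show ((C / δ : ℝ) : ℂ) • (x' (n + 1) - ((T ^ (n + 1) : (X →L[ℂ] X)ˣ) : X →L[ℂ] X) y)
          = (T : X →L[ℂ] X) (((C / δ : ℝ) : ℂ)
              • (x' n - ((T ^ n : (X →L[ℂ] X)ˣ) : X →L[ℂ] X) y)) + z n
        rw [hTsucc n y]
        have h1 : x' (n + 1) = (T : X →L[ℂ] X) (x' n) + z' n := by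
          have := hkey n; rw [sub_eq_iff_eq_add] at this; rw [this]; abel
        rw [h1]
        have h2 : ((C / δ : ℝ) : ℂ) • z' n = z n := by
          rw [hz', hc, smul_smul]
          have hr : (C / δ) * (δ / C) = 1 := by
            rw [div_mul_div_comm, mul_comm δ C, div_self (mul_ne_zero hCpos.ne' hδ.ne')]
          have : ((C / δ : ℝ) : ℂ) * ((δ / C : ℝ) : ℂ) = 1 := by
            rw [← Complex.ofReal_mul, hr, Complex.ofReal_one]
          rw [this, one_smul]
        rw [← h2, (T : X →L[ℂ] X).map_smul, (T : X →L[ℂ] X).map_sub]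
        module
    · -- C ≤ 0 : z is identically 0
      have hz0 : ∀ n, z n = 0 := by
        intro n
        have := hC n
        have : ‖z n‖ ≤ 0 := this.trans (not_lt.mp hCpos)
        simpa [norm_le_zero_iff] using this
      exact ⟨fun _ => 0, ⟨0, fun n => by simp⟩, fun n => by simp [hz0]⟩
  · -- surjectivity → shadowing
    intro hsurj
    -- first: shadowOp is surjective
    have hS : Function.Surjective (shadowOp T) := by
      intro zb
      obtain ⟨x, ⟨C, hCx⟩, hx⟩ := hsurj (fun n => zb n) ⟨‖zb‖, fun n => zb.norm_coe_le_norm n⟩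
      refine ⟨BoundedContinuousFunction.ofNormedAddCommGroup x
        continuous_of_discreteTopology C hCx, ?_⟩
      ext n
      rw [shadowOp_apply]
      simp only [BoundedContinuousFunction.coe_ofNormedAddCommGroup]
      rw [hx n]; abel
    obtain ⟨K, hK, hKp⟩ := (shadowOp T).exists_preimage_norm_le hS
    intro ε hε
    refine ⟨ε / K, by positivity, ?_⟩
    intro x hx
    set zb : BoundedContinuousFunction ℤ X := BoundedContinuousFunction.ofNormedAddCommGroup
      (fun n => x (n + 1) - (T : X →L[ℂ] X) (x n)) continuous_of_discreteTopology (ε / K) hx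
      with hzb
    obtain ⟨u, hu, hunorm⟩ := hKp zb
    have hzbnorm : ‖zb‖ ≤ ε / K :=
      BoundedContinuousFunction.norm_ofNormedAddCommGroup_le _ (by positivity) _
    have hub : ‖u‖ ≤ ε := by
      calc ‖u‖ ≤ K * ‖zb‖ := hunorm
        _ ≤ K * (ε / K) := by gcongr
        _ = ε := by field_simp
    -- w n = x n - u n is a true orbit
    set w : ℤ → X := fun n => x n - u n with hw
    have hwrec : ∀ n : ℤ, w (n + 1) = (T : X →L[ℂ] X) (w n) := by
      intro n
      have h1 : u (n + 1) - (T : X →L[ℂ] X) (u n) = x (n + 1) - (T : X →L[ℂ] X) (x n) := by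
        have := congrFun (congrArg (fun f : BoundedContinuousFunction ℤ X => (f : ℤ → X)) hu) n
        simpa [shadowOp_apply, hzb, BoundedContinuousFunction.coe_ofNormedAddCommGroup] using this
      simp only [hw, map_sub]
      rw [sub_eq_iff_eq_add] at h1 ⊢
      rw [← sub_eq_iff_eq_add] at h1
      have : x (n + 1) = u (n + 1) - (T : X →L[ℂ] X) (u n) + (T : X →L[ℂ] X) (x n) := by
        rw [h1]; abel
      rw [this]; abel
    have hworbit : ∀ n : ℤ, w n = ((T ^ n : (X →L[ℂ] X)ˣ) : X →L[ℂ] X) (w 0) := by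
      intro n
      induction n using Int.induction_on with
      | zero => simp
      | succ k ih =>
        rw [hwrec k, ih, hTsucc]
      | pred k ih =>
        -- w (-k - 1) = T⁻¹ (w (-k))
        have hstep : w (-(k : ℤ)) = (T : X →L[ℂ] X) (w (-(k : ℤ) - 1)) := by
          have := hwrec (-(k : ℤ) - 1)
          simpa using this
        have hTinv : ∀ v : X, ((T⁻¹ : (X →L[ℂ] X)ˣ) : X →L[ℂ] X) ((T : X →L[ℂ] X) v) = v := by
          intro v
          have h : ((T⁻¹ * T : (X →L[ℂ] X)ˣ) : X →L[ℂ] X) v = v := by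
            rw [inv_mul_cancel]; rfl
          rw [Units.val_mul, ContinuousLinearMap.mul_apply] at h
          exact h
        have : w (-(k : ℤ) - 1) = ((T⁻¹ : (X →L[ℂ] X)ˣ) : X →L[ℂ] X) (w (-(k : ℤ))) := by
          rw [hstep, hTinv]
        rw [this, ih]
        have hzp : (T ^ (-(k : ℤ) - 1) : (X →L[ℂ] X)ˣ) = T⁻¹ * T ^ (-(k : ℤ)) := by
          rw [sub_eq_add_neg, add_comm, ← zpow_neg_one, ← zpow_add]
        rw [hzp]
        rfl
    refine ⟨w 0, ?_⟩
    intro n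
    have : x n - ((T ^ n : (X →L[ℂ] X)ˣ) : X →L[ℂ] X) (w 0) = u n := by
      rw [← hworbit n]; simp only [hw]; abel
    rw [this]
    exact (u.norm_coe_le_norm n).trans hub
end
end

section
/- Let X be a complex Banach space and let T be an invertible bounded linear operator on X. If there exists a bounded linear operator B : X → X such that limsup_{n→∞} ‖Tⁿ B‖^{1/n} < 1 and limsup_{n→∞} ‖T⁻ⁿ(I − B)‖^{1/n} < 1, then T has the shadowing property. -/
open Filter Topology

noncomputable section

variable {X : Type*} [NormedAddCommGroup X] [NormedSpace ℂ X] [CompleteSpace X]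

set_option maxHeartbeats 1000000

lemma opBound (A G : X →L[ℂ] X)
    (h : Filter.limsup (fun n : ℕ => ‖A ^ n * G‖ ^ ((1 : ℝ) / n)) Filter.atTop < 1) :
    ∃ C r : ℝ, 1 ≤ C ∧ 0 < r ∧ r < 1 ∧ ∀ n : ℕ, ‖A ^ n * G‖ ≤ C * r ^ n := by
  set u : ℕ → ℝ := fun n => ‖A ^ n * G‖ ^ ((1 : ℝ) / n) with hu
  set K : ℝ := max 1 ‖A‖ with hK
  set c : ℝ := max 1 ‖G‖ with hc
  have hK1 : (1:ℝ) ≤ K := le_max_left _ _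
  have hc1 : (1:ℝ) ≤ c := le_max_left _ _
  have hbdd : Filter.IsBoundedUnder (· ≤ ·) Filter.atTop u := by
    apply isBoundedUnder_of
    refine ⟨K * c, fun n => ?_⟩
    rcases Nat.eq_zero_or_pos n with hn | hn
    · subst hn
      simp only [hu, Nat.cast_zero, div_zero, Real.rpow_zero]
      nlinarith
    · have hn0 : (n:ℝ) ≠ 0 := Nat.cast_ne_zero.2 hn.ne'
      have h1 : ‖A ^ n * G‖ ≤ K ^ n * c := by
        calc ‖A ^ n * G‖ ≤ ‖A ^ n‖ * ‖G‖ := norm_mul_le _ _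
        _ ≤ ‖A‖ ^ n * ‖G‖ := by
            gcongr; exact norm_pow_le' A hn
        _ ≤ K ^ n * c := by
            have hA : ‖A‖ ≤ K := le_max_right _ _
            have hG : ‖G‖ ≤ c := le_max_right _ _
            gcongr
      have h2 : u n ≤ (K ^ n * c) ^ ((1:ℝ)/n) :=
        Real.rpow_le_rpow (norm_nonneg _) h1 (by positivity)
      have hKn : ((K:ℝ) ^ n) ^ ((1:ℝ)/n) = K := by
        rw [← Real.rpow_natCast K n, ← Real.rpow_mul (by linarith : (0:ℝ) ≤ K),
          mul_one_div, div_self hn0, Real.rpow_one]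
      have h3 : (K ^ n * c) ^ ((1:ℝ)/n) = K * c ^ ((1:ℝ)/n) := by
        rw [Real.mul_rpow (by positivity) (by linarith), hKn]
      have h4 : c ^ ((1:ℝ)/n) ≤ c := by
        calc c ^ ((1:ℝ)/n) ≤ c ^ (1:ℝ) := by
              apply Real.rpow_le_rpow_of_exponent_le hc1
              rw [div_le_one (by positivity)]
              exact_mod_cast hn
          _ = c := Real.rpow_one c
      calc u n ≤ K * c ^ ((1:ℝ)/n) := by rw [← h3]; exact h2
        _ ≤ K * c := by nlinarith
  set L : ℝ := Filter.limsup u Filter.atTop with hL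
  set r : ℝ := (max L 0 + 1) / 2 with hr
  have hmax1 : max L 0 < 1 := max_lt h one_pos
  have hr0 : 0 < r := by
    have : (0:ℝ) ≤ max L 0 := le_max_right _ _
    rw [hr]; linarith
  have hr1 : r < 1 := by rw [hr]; linarith
  have hLr : L < r := by
    have h1 : L ≤ max L 0 := le_max_left _ _
    rw [hr]; linarith
  have hev : ∀ᶠ n in Filter.atTop, u n < r := eventually_lt_of_limsup_lt hLr hbdd
  obtain ⟨N, hN⟩ := eventually_atTop.mp hev
  set N' : ℕ := max N 1 with hN'
  have hgeo : ∀ n ≥ N', ‖A ^ n * G‖ ≤ r ^ n := by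
    intro n hn
    have hn1 : 1 ≤ n := le_trans (le_max_right N 1) hn
    have hnN : N ≤ n := le_trans (le_max_left N 1) hn
    have h1 : u n < r := hN n hnN
    have h2 : (u n) ^ n ≤ r ^ n := by
      apply pow_le_pow_left₀ (Real.rpow_nonneg (norm_nonneg _) _) h1.le
    have h3 : (u n) ^ n = ‖A ^ n * G‖ := by
      rw [hu]
      simp only [one_div]
      exact Real.rpow_inv_natCast_pow (norm_nonneg _) (by omega)
    linarith [h3 ▸ h2]
  set C : ℝ := 1 + ∑ k ∈ Finset.range N', ‖A ^ k * G‖ / r ^ k with hC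
  have hCsum : ∀ k ∈ Finset.range N', (0:ℝ) ≤ ‖A ^ k * G‖ / r ^ k := fun k _ => by positivity
  have hC1 : 1 ≤ C := by
    have := Finset.sum_nonneg hCsum
    rw [hC]; linarith
  refine ⟨C, r, hC1, hr0, hr1, fun n => ?_⟩
  rcases lt_or_ge n N' with hn | hn
  · have hmem : n ∈ Finset.range N' := Finset.mem_range.2 hn
    have h1 : ‖A ^ n * G‖ / r ^ n ≤ C := by
      have := Finset.single_le_sum hCsum hmem
      rw [hC]; linarith
    calc ‖A ^ n * G‖ = (‖A ^ n * G‖ / r ^ n) * r ^ n := by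
          field_simp
      _ ≤ C * r ^ n := by
          have : (0:ℝ) < r ^ n := by positivity
          exact mul_le_mul_of_nonneg_right h1 this.le
  · calc ‖A ^ n * G‖ ≤ r ^ n := hgeo n hn
      _ = 1 * r ^ n := (one_mul _).symm
      _ ≤ C * r ^ n := by
          have : (0:ℝ) < r ^ n := by positivity
          nlinarith

/-- If there is a bounded operator `B` with
`limsup ‖Tⁿ B‖^{1/n} < 1` and `limsup ‖T⁻ⁿ (I - B)‖^{1/n} < 1`, then the invertible
operator `T` has the shadowing property. -/
theorem shadowing_of_splitting (T : (X →L[ℂ] X)ˣ) (B : X →L[ℂ] X)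
    (h₁ : Filter.limsup
      (fun n : ℕ => ‖(T : X →L[ℂ] X) ^ n * B‖ ^ ((1 : ℝ) / n)) Filter.atTop < 1)
    (h₂ : Filter.limsup
      (fun n : ℕ => ‖((T⁻¹ : (X →L[ℂ] X)ˣ) : X →L[ℂ] X) ^ n *
        (1 - B)‖ ^ ((1 : ℝ) / n)) Filter.atTop < 1) :
    ShadowingProperty T := by
  obtain ⟨C₁, r₁, hC₁, hr₁0, hr₁1, hb₁⟩ := opBound ((T : X →L[ℂ] X)) B h₁
  obtain ⟨C₂, r₂, hC₂, hr₂0, hr₂1, hb₂⟩ :=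
    opBound (((T⁻¹ : (X →L[ℂ] X)ˣ)) : X →L[ℂ] X) (1 - B) h₂
  set Tc : X →L[ℂ] X := (T : X →L[ℂ] X) with hTcdef
  set Ti : X →L[ℂ] X := ((T⁻¹ : (X →L[ℂ] X)ˣ) : X →L[ℂ] X) with hTidef
  set C : ℝ := max C₁ C₂ with hCdef
  set r : ℝ := max r₁ r₂ with hrdef
  have hC1 : (1:ℝ) ≤ C := le_trans hC₁ (le_max_left _ _)
  have hC0 : (0:ℝ) < C := lt_of_lt_of_le one_pos hC1
  have hr0 : 0 < r := lt_of_lt_of_le hr₁0 (le_max_left _ _)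
  have hr1 : r < 1 := max_lt hr₁1 hr₂1
  have hB1 : ∀ n : ℕ, ‖Tc ^ n * B‖ ≤ C * r ^ n := by
    intro n
    refine le_trans (hb₁ n) (mul_le_mul (le_max_left _ _)
      (pow_le_pow_left₀ hr₁0.le (le_max_left _ _) n) (by positivity) (by linarith))
  have hB2 : ∀ n : ℕ, ‖Ti ^ n * (1 - B)‖ ≤ C * r ^ n := by
    intro n
    refine le_trans (hb₂ n) (mul_le_mul (le_max_right _ _)
      (pow_le_pow_left₀ hr₂0.le (le_max_right _ _) n) (by positivity) (by linarith))
  intro ε hε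
  have h1r : 0 < 1 - r := by linarith
  refine ⟨ε * (1 - r) / (2 * C), by positivity, ?_⟩
  intro x hx
  set δ : ℝ := ε * (1 - r) / (2 * C) with hδdef
  have hδ0 : 0 < δ := by positivity
  set e : ℤ → X := fun n => x (n + 1) - Tc (x n) with hedef
  have hed : ∀ n, ‖e n‖ ≤ δ := hx
  -- summability of the three series
  have hns1 : ∀ n : ℤ, Summable (fun m : ℕ => ‖(Tc ^ m * B) (e (n - 1 - m))‖) := by
    intro n
    refine Summable.of_nonneg_of_le (fun m => norm_nonneg _) (fun m => ?_)
      ((summable_geometric_of_lt_one hr0.le hr1).mul_left (C * δ))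
    calc ‖(Tc ^ m * B) (e (n - 1 - m))‖ ≤ ‖Tc ^ m * B‖ * ‖e (n - 1 - m)‖ :=
          ContinuousLinearMap.le_opNorm _ _
      _ ≤ (C * r ^ m) * δ := mul_le_mul (hB1 m) (hed _) (norm_nonneg _) (by positivity)
      _ = C * δ * r ^ m := by ring
  have hsum1 : ∀ n : ℤ, Summable (fun m : ℕ => (Tc ^ m * B) (e (n - 1 - m))) :=
    fun n => (hns1 n).of_norm
  have hns2 : ∀ n : ℤ, Summable (fun j : ℕ => ‖(Ti ^ (j + 1) * (1 - B)) (e (n + j))‖) := by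
    intro n
    refine Summable.of_nonneg_of_le (fun j => norm_nonneg _) (fun j => ?_)
      ((summable_geometric_of_lt_one hr0.le hr1).mul_left (C * δ))
    calc ‖(Ti ^ (j + 1) * (1 - B)) (e (n + j))‖ ≤ ‖Ti ^ (j + 1) * (1 - B)‖ * ‖e (n + j)‖ :=
          ContinuousLinearMap.le_opNorm _ _
      _ ≤ (C * r ^ (j + 1)) * δ := mul_le_mul (hB2 (j+1)) (hed _) (norm_nonneg _) (by positivity)
      _ = C * δ * r ^ (j + 1) := by ring
      _ ≤ C * δ * r ^ j := by
          have h1 : r ^ (j + 1) ≤ r ^ j := by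
            rw [pow_succ]
            nlinarith [pow_pos hr0 j]
          have := mul_le_mul_of_nonneg_left h1 (by positivity : (0:ℝ) ≤ C * δ)
          linarith
  have hsum2 : ∀ n : ℤ, Summable (fun j : ℕ => (Ti ^ (j + 1) * (1 - B)) (e (n + j))) :=
    fun n => (hns2 n).of_norm
  have hsum2' : ∀ n : ℤ, Summable (fun j : ℕ => (Ti ^ j * (1 - B)) (e (n + j))) := by
    intro n
    apply Summable.of_norm
    refine Summable.of_nonneg_of_le (fun j => norm_nonneg _) (fun j => ?_)
      ((summable_geometric_of_lt_one hr0.le hr1).mul_left (C * δ))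
    calc ‖(Ti ^ j * (1 - B)) (e (n + j))‖ ≤ ‖Ti ^ j * (1 - B)‖ * ‖e (n + j)‖ :=
          ContinuousLinearMap.le_opNorm _ _
      _ ≤ (C * r ^ j) * δ := mul_le_mul (hB2 j) (hed _) (norm_nonneg _) (by positivity)
      _ = C * δ * r ^ j := by ring
  have hTcTi : ∀ v : X, Tc (Ti v) = v := by
    intro v
    rw [← ContinuousLinearMap.mul_apply]
    have h : Tc * Ti = 1 := Units.mul_inv T
    rw [h, ContinuousLinearMap.one_apply]
  have hTiTc : ∀ v : X, Ti (Tc v) = v := by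
    intro v
    rw [← ContinuousLinearMap.mul_apply]
    have h : Ti * Tc = 1 := Units.inv_mul T
    rw [h, ContinuousLinearMap.one_apply]
  have hhalf : C * δ / (1 - r) = ε / 2 := by
    rw [hδdef]
    field_simp
  obtain ⟨d, hrec, hnorm⟩ : ∃ d : ℤ → X,
      (∀ n : ℤ, d (n + 1) = Tc (d n) + e n) ∧ ∀ n : ℤ, ‖d n‖ ≤ ε := by
    refine ⟨fun n => (∑' m : ℕ, (Tc ^ m * B) (e (n - 1 - m)))
      - ∑' j : ℕ, (Ti ^ (j + 1) * (1 - B)) (e (n + j)), fun n => ?_, fun n => ?_⟩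
    · show (∑' m : ℕ, (Tc ^ m * B) (e (n + 1 - 1 - m)))
          - (∑' j : ℕ, (Ti ^ (j + 1) * (1 - B)) (e (n + 1 + j)))
        = Tc ((∑' m : ℕ, (Tc ^ m * B) (e (n - 1 - m)))
          - ∑' j : ℕ, (Ti ^ (j + 1) * (1 - B)) (e (n + j))) + e n
      have e1 : (∑' m : ℕ, (Tc ^ m * B) (e (n + 1 - 1 - m)))
          = B (e n) + Tc (∑' m : ℕ, (Tc ^ m * B) (e (n - 1 - m))) := by
        rw [Summable.tsum_eq_zero_add (hsum1 (n + 1)), Tc.map_tsum (hsum1 n)]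
        congr 1
        · norm_num
        · refine tsum_congr fun m => ?_
          have hidx : n + 1 - 1 - ((m : ℤ) + 1) = n - 1 - m := by ring
          rw [show ((m + 1 : ℕ) : ℤ) = (m : ℤ) + 1 by push_cast; ring, hidx, pow_succ',
            mul_assoc, ContinuousLinearMap.mul_apply]
      have e2 : (∑' j : ℕ, (Ti ^ (j + 1) * (1 - B)) (e (n + 1 + j)))
          = Tc (∑' j : ℕ, (Ti ^ (j + 1) * (1 - B)) (e (n + j))) - (1 - B) (e n) := by
        have hTcj : ∀ j : ℕ, Tc ((Ti ^ (j + 1) * (1 - B)) (e (n + j)))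
            = (Ti ^ j * (1 - B)) (e (n + j)) := by
          intro j
          rw [← ContinuousLinearMap.mul_apply, ← mul_assoc, pow_succ', ← mul_assoc]
          have h : Tc * Ti = 1 := Units.mul_inv T
          rw [h, one_mul, ContinuousLinearMap.mul_apply]
        rw [Tc.map_tsum (hsum2 n), tsum_congr hTcj, Summable.tsum_eq_zero_add (hsum2' n)]
        simp only [pow_zero, one_mul, Nat.cast_zero, add_zero]
        rw [add_sub_cancel_left]
        refine tsum_congr fun j => ?_
        exact congrArg _ (congrArg e (by push_cast; ring))
      rw [map_sub, e1, e2]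
      have hsplit : (1 - B) (e n) = e n - B (e n) := by
        simp [ContinuousLinearMap.sub_apply]
      rw [hsplit]
      abel
    · show ‖(∑' m : ℕ, (Tc ^ m * B) (e (n - 1 - m)))
          - ∑' j : ℕ, (Ti ^ (j + 1) * (1 - B)) (e (n + j))‖ ≤ ε
      have hb1 : ‖∑' m : ℕ, (Tc ^ m * B) (e (n - 1 - m))‖ ≤ ε / 2 := by
        rw [← hhalf]
        calc ‖∑' m : ℕ, (Tc ^ m * B) (e (n - 1 - m))‖
            ≤ ∑' m : ℕ, ‖(Tc ^ m * B) (e (n - 1 - m))‖ := norm_tsum_le_tsum_norm (hns1 n)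
          _ ≤ ∑' m : ℕ, C * δ * r ^ m := by
              refine Summable.tsum_le_tsum (fun m => ?_) (hns1 n)
                ((summable_geometric_of_lt_one hr0.le hr1).mul_left (C * δ))
              calc ‖(Tc ^ m * B) (e (n - 1 - m))‖ ≤ ‖Tc ^ m * B‖ * ‖e (n - 1 - m)‖ :=
                    ContinuousLinearMap.le_opNorm _ _
                _ ≤ (C * r ^ m) * δ := mul_le_mul (hB1 m) (hed _) (norm_nonneg _) (by positivity)
                _ = C * δ * r ^ m := by ring
          _ = C * δ * (1 - r)⁻¹ := by
              rw [tsum_mul_left, tsum_geometric_of_lt_one hr0.le hr1]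
          _ = C * δ / (1 - r) := by rw [div_eq_mul_inv]
      have hb2' : ‖∑' j : ℕ, (Ti ^ (j + 1) * (1 - B)) (e (n + j))‖ ≤ ε / 2 := by
        rw [← hhalf]
        calc ‖∑' j : ℕ, (Ti ^ (j + 1) * (1 - B)) (e (n + j))‖
            ≤ ∑' j : ℕ, ‖(Ti ^ (j + 1) * (1 - B)) (e (n + j))‖ := norm_tsum_le_tsum_norm (hns2 n)
          _ ≤ ∑' j : ℕ, C * δ * r ^ j := by
              refine Summable.tsum_le_tsum (fun j => ?_) (hns2 n)
                ((summable_geometric_of_lt_one hr0.le hr1).mul_left (C * δ))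
              calc ‖(Ti ^ (j + 1) * (1 - B)) (e (n + j))‖
                  ≤ ‖Ti ^ (j + 1) * (1 - B)‖ * ‖e (n + j)‖ := ContinuousLinearMap.le_opNorm _ _
                _ ≤ (C * r ^ (j + 1)) * δ :=
                    mul_le_mul (hB2 (j+1)) (hed _) (norm_nonneg _) (by positivity)
                _ = C * δ * r ^ (j + 1) := by ring
                _ ≤ C * δ * r ^ j := by
                    have h1 : r ^ (j + 1) ≤ r ^ j := by
                      rw [pow_succ]
                      nlinarith [pow_pos hr0 j]
                    have := mul_le_mul_of_nonneg_left h1 (by positivity : (0:ℝ) ≤ C * δ)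
                    linarith
          _ = C * δ * (1 - r)⁻¹ := by
              rw [tsum_mul_left, tsum_geometric_of_lt_one hr0.le hr1]
          _ = C * δ / (1 - r) := by rw [div_eq_mul_inv]
      calc ‖(∑' m : ℕ, (Tc ^ m * B) (e (n - 1 - m)))
            - ∑' j : ℕ, (Ti ^ (j + 1) * (1 - B)) (e (n + j))‖
          ≤ ‖∑' m : ℕ, (Tc ^ m * B) (e (n - 1 - m))‖
            + ‖∑' j : ℕ, (Ti ^ (j + 1) * (1 - B)) (e (n + j))‖ := norm_sub_le _ _
        _ ≤ ε / 2 + ε / 2 := add_le_add hb1 hb2'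
        _ = ε := by ring
  have hstep : ∀ n : ℤ, x (n + 1) - d (n + 1) = Tc (x n - d n) := by
    intro n
    rw [hrec n, map_sub]
    have hxk : x (n + 1) = Tc (x n) + e n := by
      have h : e n = x (n + 1) - Tc (x n) := rfl
      rw [h]; abel
    rw [hxk]
    abel
  have hg : ∀ n : ℤ, x n - d n = ((T ^ n : (X →L[ℂ] X)ˣ) : X →L[ℂ] X) (x 0 - d 0) := by
    intro n
    induction n using Int.induction_on with
    | zero => simp
    | succ k ih =>
        rw [hstep k, ih, show ((k : ℤ) + 1) = 1 + (k : ℤ) by ring, zpow_add T 1 k,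
          Units.val_mul, ContinuousLinearMap.mul_apply, zpow_one]
    | pred k ih =>
        have h1 := hstep (-(k : ℤ) - 1)
        rw [show (-(k : ℤ) - 1) + 1 = -(k : ℤ) by ring] at h1
        have h2 : x (-(k : ℤ) - 1) - d (-(k : ℤ) - 1) = Ti (x (-(k : ℤ)) - d (-(k : ℤ))) := by
          rw [h1, hTiTc]
        rw [h2, ih, show (-(k : ℤ) - 1) = (-1) + (-(k : ℤ)) by ring, zpow_add T (-1) (-k),
          Units.val_mul, ContinuousLinearMap.mul_apply, zpow_neg_one]
  refine ⟨x 0 - d 0, fun n => ?_⟩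
  have h : x n - ((T ^ n : (X →L[ℂ] X)ˣ) : X →L[ℂ] X) (x 0 - d 0) = d n := by
    rw [← hg n]
    abel
  rw [h]
  exact hnorm n
end
end

section
/- Let X be a complex Banach space, let T be an invertible bounded linear operator on X, and let B : X → X be a bounded linear operator. Suppose there are constants K > 0 and 0 < q < 1 such that ‖Tᵏ B‖ ≤ K qᵏ and ‖T⁻ᵏ(I − B)‖ ≤ K qᵏ for all integers k ≥ 0. Then for every bounded sequence (z_n)_{n∈ℤ} in X, the sequence defined by x_n = Σ_{k=0}^∞ Tᵏ B z_{n−k−1} − Σ_{k=1}^∞ T⁻ᵏ(I − B) z_{n+k−1} is well defined, satisfies sup_{n∈ℤ} ‖x_n‖ ≤ K·(1+q)/(1−q)·sup_{n∈ℤ}‖z_n‖, and satisfies x_{n+1} = T x_n + z_n for all n ∈ ℤ. -/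
open Filter Topology

noncomputable section

variable {X : Type*} [NormedAddCommGroup X] [NormedSpace ℂ X] [CompleteSpace X]

/-- If `‖Tᵏ B‖ ≤ K qᵏ` and `‖T⁻ᵏ (I - B)‖ ≤ K qᵏ` for all `k ≥ 0`, then for every
bounded sequence `(z_n)` the series defining
`x_n = Σ_{k≥0} Tᵏ B z_{n-k-1} - Σ_{k≥1} T⁻ᵏ (I - B) z_{n+k-1}` converge, the sequence
`(x_n)` satisfies `‖x_n‖ ≤ K (1+q)/(1-q) · sup_m ‖z_m‖` and
`x_{n+1} = T x_n + z_n` for all `n`. -/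
theorem explicit_solution_of_difference_equation (T : (X →L[ℂ] X)ˣ) (B : X →L[ℂ] X)
    (K q : ℝ) (hK : 0 < K) (hq0 : 0 < q) (hq1 : q < 1)
    (hTB : ∀ k : ℕ, ‖(T : X →L[ℂ] X) ^ k * B‖ ≤ K * q ^ k)
    (hTIB : ∀ k : ℕ,
      ‖((T⁻¹ : (X →L[ℂ] X)ˣ) : X →L[ℂ] X) ^ k * (1 - B)‖ ≤ K * q ^ k)
    (z : ℤ → X) (hz : BddAbove (Set.range fun n : ℤ => ‖z n‖)) :
    (∀ n : ℤ, Summable fun k : ℕ =>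
      ((T : X →L[ℂ] X) ^ k * B) (z (n - k - 1))) ∧
    (∀ n : ℤ, Summable fun k : ℕ =>
      (((T⁻¹ : (X →L[ℂ] X)ˣ) : X →L[ℂ] X) ^ (k + 1) * (1 - B)) (z (n + k))) ∧
    (∀ n : ℤ,
      ‖(∑' k : ℕ, ((T : X →L[ℂ] X) ^ k * B) (z (n - k - 1))) -
        ∑' k : ℕ, (((T⁻¹ : (X →L[ℂ] X)ˣ) : X →L[ℂ] X) ^ (k + 1) * (1 - B)) (z (n + k))‖
        ≤ K * (1 + q) / (1 - q) * ⨆ m : ℤ, ‖z m‖) ∧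
    (∀ n : ℤ,
      ((∑' k : ℕ, ((T : X →L[ℂ] X) ^ k * B) (z ((n + 1) - k - 1))) -
        ∑' k : ℕ,
          (((T⁻¹ : (X →L[ℂ] X)ˣ) : X →L[ℂ] X) ^ (k + 1) * (1 - B)) (z ((n + 1) + k))) =
      (T : X →L[ℂ] X)
        ((∑' k : ℕ, ((T : X →L[ℂ] X) ^ k * B) (z (n - k - 1))) -
          ∑' k : ℕ,
            (((T⁻¹ : (X →L[ℂ] X)ˣ) : X →L[ℂ] X) ^ (k + 1) * (1 - B)) (z (n + k))) +
        z n) := by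
  set Tc : X →L[ℂ] X := (T : X →L[ℂ] X) with hTc
  set Ti : X →L[ℂ] X := ((T⁻¹ : (X →L[ℂ] X)ˣ) : X →L[ℂ] X) with hTi
  set M : ℝ := ⨆ m : ℤ, ‖z m‖ with hMdef
  have hM : ∀ m : ℤ, ‖z m‖ ≤ M := fun m => le_ciSup hz m
  have hM0 : (0:ℝ) ≤ M := (norm_nonneg _).trans (hM 0)
  have hbound1 : ∀ (n : ℤ) (k : ℕ), ‖(Tc ^ k * B) (z (n - k - 1))‖ ≤ K * q ^ k * M := by
    intro n k
    calc ‖(Tc ^ k * B) (z (n - k - 1))‖ ≤ ‖Tc ^ k * B‖ * ‖z (n - k - 1)‖ :=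
          ContinuousLinearMap.le_opNorm _ _
      _ ≤ K * q ^ k * M := by
          apply mul_le_mul (hTB k) (hM _) (norm_nonneg _)
          positivity
  have hbound2 : ∀ (n : ℤ) (k : ℕ), ‖(Ti ^ k * (1 - B)) (z (n + k - 1))‖ ≤ K * q ^ k * M := by
    intro n k
    calc ‖(Ti ^ k * (1 - B)) (z (n + k - 1))‖ ≤ ‖Ti ^ k * (1 - B)‖ * ‖z (n + k - 1)‖ :=
          ContinuousLinearMap.le_opNorm _ _
      _ ≤ K * q ^ k * M := by
          apply mul_le_mul (hTIB k) (hM _) (norm_nonneg _)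
          positivity
  have hgeo : Summable fun k : ℕ => K * q ^ k * M :=
    ((summable_geometric_of_lt_one hq0.le hq1).mul_left K).mul_right M
  have hgeoS : HasSum (fun k : ℕ => K * q ^ k * M) (K * (1 - q)⁻¹ * M) :=
    ((hasSum_geometric_of_lt_one hq0.le hq1).mul_left K).mul_right M
  have hs1 : ∀ n : ℤ, Summable fun k : ℕ => (Tc ^ k * B) (z (n - k - 1)) := by
    intro n
    exact Summable.of_norm_bounded hgeo (hbound1 n)
  have hs2' : ∀ n : ℤ, Summable fun k : ℕ => (Ti ^ k * (1 - B)) (z (n + k - 1)) := by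
    intro n
    exact Summable.of_norm_bounded hgeo (hbound2 n)
  have hbound2' : ∀ (n : ℤ) (k : ℕ),
      ‖(Ti ^ (k + 1) * (1 - B)) (z (n + k))‖ ≤ K * (q ^ k * q) * M := by
    intro n k
    have := hbound2 n (k + 1)
    have he : n + (k + 1 : ℕ) - 1 = n + k := by push_cast; ring
    rw [he] at this
    calc ‖(Ti ^ (k + 1) * (1 - B)) (z (n + k))‖ ≤ K * q ^ (k + 1) * M := this
      _ = K * (q ^ k * q) * M := by rw [pow_succ]
  have hgeo2 : Summable fun k : ℕ => K * (q ^ k * q) * M :=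
    (((summable_geometric_of_lt_one hq0.le hq1).mul_right q).mul_left K).mul_right M
  have hgeo2S : HasSum (fun k : ℕ => K * (q ^ k * q) * M) (K * ((1 - q)⁻¹ * q) * M) :=
    (((hasSum_geometric_of_lt_one hq0.le hq1).mul_right q).mul_left K).mul_right M
  have hs2 : ∀ n : ℤ, Summable fun k : ℕ => (Ti ^ (k + 1) * (1 - B)) (z (n + k)) := by
    intro n
    exact Summable.of_norm_bounded hgeo2 (hbound2' n)
  refine ⟨hs1, hs2, ?_, ?_⟩
  · intro n
    have h1 : ‖∑' k : ℕ, (Tc ^ k * B) (z (n - k - 1))‖ ≤ K * (1 - q)⁻¹ * M :=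
      tsum_of_norm_bounded hgeoS (hbound1 n)
    have h2 : ‖∑' k : ℕ, (Ti ^ (k + 1) * (1 - B)) (z (n + k))‖ ≤ K * ((1 - q)⁻¹ * q) * M :=
      tsum_of_norm_bounded hgeo2S (hbound2' n)
    have := norm_sub_le (∑' k : ℕ, (Tc ^ k * B) (z (n - k - 1)))
      (∑' k : ℕ, (Ti ^ (k + 1) * (1 - B)) (z (n + k)))
    have hq1' : (1:ℝ) - q ≠ 0 := by linarith
    calc ‖(∑' k : ℕ, (Tc ^ k * B) (z (n - k - 1))) -
        ∑' k : ℕ, (Ti ^ (k + 1) * (1 - B)) (z (n + k))‖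
        ≤ K * (1 - q)⁻¹ * M + K * ((1 - q)⁻¹ * q) * M := this.trans (add_le_add h1 h2)
      _ = K * (1 + q) / (1 - q) * M := by field_simp
  · intro n
    have hTcTi : Tc * Ti = 1 := by
      rw [hTc, hTi, ← Units.val_mul, mul_inv_cancel, Units.val_one]
    -- s (n+1) = B (z n) + Tc (s n)
    have hsplit1 : (∑' k : ℕ, (Tc ^ k * B) (z ((n + 1) - k - 1))) =
        B (z n) + Tc (∑' k : ℕ, (Tc ^ k * B) (z (n - k - 1))) := by
      rw [Summable.tsum_eq_zero_add (hs1 (n + 1))]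
      congr 1
      · simp
      · rw [ContinuousLinearMap.map_tsum _ (hs1 n)]
        apply tsum_congr
        intro k
        have he : n + 1 - (k + 1 : ℕ) - 1 = n - k - 1 := by push_cast; ring
        rw [he, pow_succ', mul_assoc, ContinuousLinearMap.mul_apply]
    -- Tc (t n) = (1 - B) (z n) + t (n+1)
    have hsplit2 : Tc (∑' k : ℕ, (Ti ^ (k + 1) * (1 - B)) (z (n + k))) =
        (1 - B) (z n) + ∑' k : ℕ, (Ti ^ (k + 1) * (1 - B)) (z ((n + 1) + k)) := by
      rw [ContinuousLinearMap.map_tsum _ (hs2 n)]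
      have hk : ∀ k : ℕ, Tc ((Ti ^ (k + 1) * (1 - B)) (z (n + k))) =
          (Ti ^ k * (1 - B)) (z (n + k)) := by
        intro k
        rw [← ContinuousLinearMap.mul_apply, pow_succ', ← mul_assoc, ← mul_assoc,
          hTcTi, one_mul]
      rw [tsum_congr hk]
      have hsum : Summable fun k : ℕ => (Ti ^ k * (1 - B)) (z (n + k)) := by
        have := hs2' (n + 1)
        refine this.congr fun k => ?_
        congr 2
        ring
      rw [Summable.tsum_eq_zero_add hsum]
      congr 1
      · simp
      · apply tsum_congr
        intro k
        congr 2
        push_cast; ring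
    rw [hsplit1, map_sub, hsplit2]
    have : (1 - B) (z n) = z n - B (z n) := by
      simp [ContinuousLinearMap.sub_apply]
    rw [this]
    abel
end
end

section
/- Let X be a complex Hilbert space, let T be an invertible bounded linear operator on X, and let α > 0. If Σ_{n∈ℤ} ‖y_{n−1} − T* y_n‖ ≥ α · Σ_{n∈ℤ} ‖y_n‖ for every sequence (y_n)_{n∈ℤ} in X with Σ_{n∈ℤ} ‖y_n‖ < ∞, then ‖(I − T*)x‖ ≥ α‖x‖ for every x ∈ X; in particular I − T* is bounded below. -/
open Filter Topology

noncomputable section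

variable {X : Type*} [NormedAddCommGroup X] [InnerProductSpace ℂ X] [CompleteSpace X]

/-- If `Σ_n ‖y_{n-1} - T* y_n‖ ≥ α Σ_n ‖y_n‖` for every `ℓ¹` sequence `(y_n)` in `X`,
then `‖(I - T*) x‖ ≥ α ‖x‖` for every `x ∈ X`; in particular `I - T*` is bounded
below. -/
theorem boundedBelow_of_l1_estimate (T : (X →L[ℂ] X)ˣ) (α : ℝ) (hα : 0 < α)
    (h : ∀ y : ℤ → X, Summable (fun n : ℤ => ‖y n‖) →
      α * ∑' n : ℤ, ‖y n‖ ≤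
        ∑' n : ℤ, ‖y (n - 1) - (ContinuousLinearMap.adjoint (T : X →L[ℂ] X)) (y n)‖) :
    ∀ x : X,
      α * ‖x‖ ≤ ‖((1 : X →L[ℂ] X) -
        ContinuousLinearMap.adjoint (T : X →L[ℂ] X)) x‖ := by
  intro x
  set A := ContinuousLinearMap.adjoint (T : X →L[ℂ] X) with hA
  have hvx : ((1 : X →L[ℂ] X) - A) x = x - A x := by simp
  rw [hvx]
  set v := x - A x with hv
  have key : ∀ N : ℕ, 1 ≤ N →
      α * (N * ‖x‖) ≤ ‖A x‖ + ‖x‖ + ((N : ℝ) - 1) * ‖v‖ := by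
    intro N hN
    set y : ℤ → X := fun n => if n ∈ Finset.Ico (0 : ℤ) (N : ℤ) then x else 0 with hy
    have hsupp : ∀ n ∉ Finset.Ico (0 : ℤ) (N : ℤ), ‖y n‖ = 0 := by
      intro n hn
      show ‖if n ∈ Finset.Ico (0 : ℤ) (N : ℤ) then x else 0‖ = 0
      rw [if_neg hn, norm_zero]
    have hsum1 : Summable (fun n : ℤ => ‖y n‖) :=
      summable_of_ne_finset_zero hsupp
    have ht1 : ∑' n : ℤ, ‖y n‖ = N * ‖x‖ := by
      rw [tsum_eq_sum hsupp]
      rw [Finset.sum_congr rfl (fun n hn => show ‖if n ∈ Finset.Ico (0 : ℤ) (N : ℤ) then x else 0‖ = ‖x‖ by rw [if_pos hn])]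
      simp [Finset.sum_const]
    have hsupp2 : ∀ n ∉ Finset.Ico (0 : ℤ) ((N : ℤ) + 1),
        ‖y (n - 1) - A (y n)‖ = 0 := by
      intro n hn
      simp only [Finset.mem_Ico, not_and_or, not_le, not_lt] at hn
      have h1 : y (n - 1) = 0 := if_neg (by simp only [Finset.mem_Ico]; omega)
      have h2 : y n = 0 := if_neg (by simp only [Finset.mem_Ico]; omega)
      simp [h1, h2]
    have ht2 : ∑' n : ℤ, ‖y (n - 1) - A (y n)‖
        = ‖A x‖ + ((N : ℝ) - 1) * ‖v‖ + ‖x‖ := by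
      rw [tsum_eq_sum hsupp2]
      have hNpos : (0 : ℤ) < (N : ℤ) := by exact_mod_cast hN
      have hdecomp : Finset.Ico (0 : ℤ) ((N : ℤ) + 1)
          = insert 0 (insert (N : ℤ) (Finset.Ico (1 : ℤ) (N : ℤ))) := by
        ext n; simp [Finset.mem_Ico]; omega
      rw [hdecomp]
      rw [Finset.sum_insert (by simp [Finset.mem_Ico]; omega),
          Finset.sum_insert (by simp [Finset.mem_Ico])]
      have e0 : ‖y (0 - 1) - A (y 0)‖ = ‖A x‖ := by
        have : y (0 - 1) = 0 := by simp [hy]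
        have h0 : y 0 = x := by simp [hy, hNpos]; intro hN0; omega
        rw [this, h0]; simp
      have eN : ‖y ((N : ℤ) - 1) - A (y (N : ℤ))‖ = ‖x‖ := by
        have h1 : y ((N : ℤ) - 1) = x := if_pos (by simp only [Finset.mem_Ico]; omega)
        have h2 : y (N : ℤ) = 0 := by simp [hy]
        rw [h1, h2]; simp
      have emid : ∀ n ∈ Finset.Ico (1 : ℤ) (N : ℤ),
          ‖y (n - 1) - A (y n)‖ = ‖v‖ := by
        intro n hn
        simp only [Finset.mem_Ico] at hn
        have h1 : y (n - 1) = x := if_pos (by simp only [Finset.mem_Ico]; omega)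
        have h2 : y n = x := if_pos (by simp only [Finset.mem_Ico]; omega)
        rw [h1, h2, hv]
      rw [e0, eN, Finset.sum_congr rfl emid, Finset.sum_const]
      have hcard : (Finset.Ico (1 : ℤ) (N : ℤ)).card = N - 1 := by
        rw [Int.card_Ico]; omega
      rw [hcard]
      rw [nsmul_eq_mul, Nat.cast_sub hN]
      push_cast
      ring
    have := h y hsum1
    rw [ht1, ht2] at this
    linarith
  set c := ‖A x‖ + ‖x‖ - ‖v‖ with hc
  have hlim : Tendsto (fun N : ℕ => c / N + ‖v‖) atTop (𝓝 ‖v‖) := by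
    have := (tendsto_const_div_atTop_nhds_zero_nat c).add_const ‖v‖
    simpa using this
  refine ge_of_tendsto hlim ?_
  filter_upwards [eventually_ge_atTop 1] with N hN
  have hN0 : (0 : ℝ) < N := by exact_mod_cast hN
  have hk := key N hN
  rw [div_add' _ _ _ (ne_of_gt hN0), le_div_iff₀ hN0]
  nlinarith [hk]
end
end

section
/- Let X be a complex Hilbert space and let T be an invertible bounded linear operator on X such that λI − T has a bounded linear right inverse for every λ with 1 − ε < |λ| < 1 + ε (for some ε > 0), and suppose there is a holomorphic operator-valued right inverse R on this annulus, i.e., (λI − T)R(λ) = I there, with Laurent expansion R(λ) = Σ_{n∈ℤ} C_n λⁿ. Then the operator B = C₋₁ satisfies limsup_{n→∞} ‖Tⁿ B‖^{1/n} ≤ 1 − ε < 1 and limsup_{n→∞} ‖T⁻ⁿ(I − B)‖^{1/n} ≤ 1/(1 + ε) < 1. -/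
open Filter Topology Metric Set

noncomputable section

variable {X : Type*} [NormedAddCommGroup X] [InnerProductSpace ℂ X] [CompleteSpace X]

private lemma bdd_terms {E : Type*} [NormedAddCommGroup E] {f : ℕ → E} {L : E}
    (h : Tendsto (fun N => ∑ n ∈ Finset.range N, f n) atTop (𝓝 L)) :
    ∃ M : ℝ, 0 ≤ M ∧ ∀ n, ‖f n‖ ≤ M := by
  have h1 : Tendsto (fun N => (∑ n ∈ Finset.range (N + 1), f n) - ∑ n ∈ Finset.range N, f n)
      atTop (𝓝 (L - L)) := ((tendsto_add_atTop_iff_nat 1).2 h).sub h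
  have h2 : Tendsto (fun N => ‖f N‖) atTop (𝓝 0) := by
    simpa [Finset.sum_range_succ] using h1.norm
  obtain ⟨M, hM⟩ := h2.bddAbove_range
  exact ⟨M, le_trans (norm_nonneg (f 0)) (hM ⟨0, rfl⟩), fun n => hM ⟨n, rfl⟩⟩

private lemma circleIntegral_add' {E : Type*} [NormedAddCommGroup E] [NormedSpace ℂ E]
    {f g : ℂ → E} {c : ℂ} {r : ℝ} (hf : CircleIntegrable f c r) (hg : CircleIntegrable g c r) :
    (∮ z in C(c, r), (f z + g z)) = (∮ z in C(c, r), f z) + ∮ z in C(c, r), g z := by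
  simp only [circleIntegral, smul_add]
  exact intervalIntegral.integral_add hf.out hg.out

private lemma circle_zpow (k : ℤ) :
    (∮ z in C((0 : ℂ), 1), z ^ k) = if k = -1 then (2 * Real.pi * Complex.I : ℂ) else 0 := by
  split_ifs with hk
  · subst hk
    have := circleIntegral.integral_sub_inv_of_mem_ball (c := (0:ℂ)) (w := 0) (R := 1)
      (mem_ball_self one_pos)
    simpa [zpow_neg, zpow_one] using this
  · simpa using circleIntegral.integral_sub_zpow_of_ne hk 0 0 1

private lemma zpow_contOn (k : ℤ) : ContinuousOn (fun z : ℂ => z ^ k) (Metric.sphere (0:ℂ) 1) := by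
  refine ContinuousOn.zpow₀ continuousOn_id k fun z hz => Or.inl ?_
  rw [mem_sphere_zero_iff_norm] at hz
  simp only [id] at *
  intro h0
  rw [h0] at hz
  simp at hz

private lemma circleIntegrable_zpow_smul {E : Type*} [NormedAddCommGroup E] [NormedSpace ℂ E]
    (k : ℤ) (v : E) : CircleIntegrable (fun z : ℂ => z ^ k • v) 0 1 :=
  ContinuousOn.circleIntegrable zero_le_one ((zpow_contOn k).smul continuousOn_const)

private lemma circleIntegrable_finsum {E : Type*} [NormedAddCommGroup E] [NormedSpace ℂ E]
    (N : ℕ) (g : ℕ → ℂ → E) (h : ∀ n, CircleIntegrable (g n) 0 1) :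
    CircleIntegrable (fun z => ∑ n ∈ Finset.range N, g n z) 0 1 := by
  induction N with
  | zero => simp only [Finset.range_zero, Finset.sum_empty]; exact circleIntegrable_const (0 : E) 0 1
  | succ N ih =>
    simp only [Finset.sum_range_succ]
    exact ih.add (h N)

private lemma circleIntegral_finsum {E : Type*} [NormedAddCommGroup E] [NormedSpace ℂ E]
    [CompleteSpace E] (N : ℕ) (g : ℕ → ℂ → E) (h : ∀ n, CircleIntegrable (g n) 0 1) :
    (∮ z in C((0:ℂ), 1), ∑ n ∈ Finset.range N, g n z)
      = ∑ n ∈ Finset.range N, ∮ z in C((0:ℂ), 1), g n z := by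
  induction N with
  | zero => simp [circleIntegral]
  | succ N ih =>
    simp only [Finset.sum_range_succ]
    rw [← ih, ← circleIntegral_add' (circleIntegrable_finsum N g h) (h N)]

private lemma circle_coeff {E : Type*} [NormedAddCommGroup E] [NormedSpace ℂ E] [CompleteSpace E]
    {D : ℤ → E} {S : ℂ → E} {Ma Mb a b : ℝ}
    (ha0 : 0 ≤ a) (ha : a < 1) (hb0 : 0 ≤ b) (hb : b < 1)
    (hDp : ∀ n : ℕ, ‖D n‖ ≤ Ma * a ^ n)
    (hDm : ∀ n : ℕ, ‖D (-(n : ℤ) - 1)‖ ≤ Mb * b ^ n)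
    (hconv : ∀ z : ℂ, ‖z‖ = 1 →
      Tendsto (fun N : ℕ => (∑ n ∈ Finset.range N, z ^ n • D n)
        + ∑ n ∈ Finset.range N, z ^ (-(n : ℤ) - 1) • D (-(n : ℤ) - 1)) atTop (𝓝 (S z)))
    (m : ℤ) :
    (∮ z in C((0:ℂ), 1), z ^ m • S z) = (2 * Real.pi * Complex.I : ℂ) • D (-m - 1) := by
  have hMa : 0 ≤ Ma := le_trans (norm_nonneg (D 0)) (by simpa using hDp 0)
  have hMb : 0 ≤ Mb := le_trans (norm_nonneg (D (-1))) (by simpa using hDm 0)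
  set c2 : ℂ := 2 * Real.pi * Complex.I with hc2
  set P : ℕ → ℂ → E := fun N z => (∑ n ∈ Finset.range N, z ^ n • D n)
    + ∑ n ∈ Finset.range N, z ^ (-(n : ℤ) - 1) • D (-(n : ℤ) - 1) with hP
  have step1 : ∀ N : ℕ, (∮ z in C((0:ℂ), 1), z ^ m • P N z)
      = (∑ n ∈ Finset.range N, (if (m + n : ℤ) = -1 then c2 else 0) • D n)
        + ∑ n ∈ Finset.range N, (if (m - n - 1 : ℤ) = -1 then c2 else 0) • D (-(n : ℤ) - 1) := by
    intro N
    have e1 : (∮ z in C((0:ℂ), 1), z ^ m • P N z)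
        = ∮ z in C((0:ℂ), 1), ((∑ n ∈ Finset.range N, z ^ (m + n) • D n)
          + ∑ n ∈ Finset.range N, z ^ (m - n - 1) • D (-(n : ℤ) - 1)) := by
      refine circleIntegral.integral_congr zero_le_one fun z hz => ?_
      rw [mem_sphere_zero_iff_norm] at hz
      have hz0 : z ≠ 0 := by intro h0; rw [h0] at hz; simp at hz
      simp only [hP, smul_add, Finset.smul_sum, smul_smul]
      congr 1
      · exact Finset.sum_congr rfl fun n _ => by
          rw [← zpow_natCast z n, ← zpow_add₀ hz0]
      · exact Finset.sum_congr rfl fun n _ => by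
          rw [← zpow_add₀ hz0]; congr 1; ring
    rw [e1, circleIntegral_add'
        (circleIntegrable_finsum N _ fun n => circleIntegrable_zpow_smul _ _)
        (circleIntegrable_finsum N _ fun n => circleIntegrable_zpow_smul _ _),
      circleIntegral_finsum N _ (fun n => circleIntegrable_zpow_smul _ _),
      circleIntegral_finsum N _ (fun n => circleIntegrable_zpow_smul _ _)]
    congr 1
    · exact Finset.sum_congr rfl fun n _ => by
        rw [circleIntegral.integral_smul_const, circle_zpow]
    · exact Finset.sum_congr rfl fun n _ => by
        rw [circleIntegral.integral_smul_const, circle_zpow]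
  have step2 : ∀ N : ℕ, m.natAbs + 1 ≤ N →
      (∮ z in C((0:ℂ), 1), z ^ m • P N z) = c2 • D (-m - 1) := by
    intro N hN
    rw [step1 N]
    rcases le_or_gt 0 m with hm | hm
    · have hs1 : (∑ n ∈ Finset.range N, (if (m + n : ℤ) = -1 then c2 else 0) • D n) = 0 :=
        Finset.sum_eq_zero fun n _ => by rw [if_neg (by omega), zero_smul]
      have hs2 : (∑ n ∈ Finset.range N, (if (m - n - 1 : ℤ) = -1 then c2 else 0)
          • D (-(n : ℤ) - 1)) = c2 • D (-m - 1) := by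
        have congr1 : ∀ n ∈ Finset.range N, (if (m - n - 1 : ℤ) = -1 then c2 else 0)
            • D (-(n : ℤ) - 1) = if n = m.toNat then c2 • D (-m - 1) else 0 := by
          intro n _
          by_cases h : n = m.toNat
          · subst h
            rw [if_pos (by omega), if_pos rfl]
            congr 2
            omega
          · rw [if_neg (by omega), zero_smul, if_neg h]
        rw [Finset.sum_congr rfl congr1, Finset.sum_ite_eq' (Finset.range N) m.toNat,
          if_pos (Finset.mem_range.2 (by omega))]
      rw [hs1, hs2, zero_add]
    · have hs2 : (∑ n ∈ Finset.range N, (if (m - n - 1 : ℤ) = -1 then c2 else 0)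
          • D (-(n : ℤ) - 1)) = 0 :=
        Finset.sum_eq_zero fun n _ => by rw [if_neg (by omega), zero_smul]
      have hs1 : (∑ n ∈ Finset.range N, (if (m + n : ℤ) = -1 then c2 else 0) • D n)
          = c2 • D (-m - 1) := by
        have congr1 : ∀ n ∈ Finset.range N, (if (m + n : ℤ) = -1 then c2 else 0) • D n
            = if n = (-1 - m).toNat then c2 • D (-m - 1) else 0 := by
          intro n _
          by_cases h : n = (-1 - m).toNat
          · subst h
            rw [if_pos (by omega), if_pos rfl]
            congr 2
            omega
          · rw [if_neg (by omega), zero_smul, if_neg h]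
        rw [Finset.sum_congr rfl congr1, Finset.sum_ite_eq' (Finset.range N) (-1 - m).toNat,
          if_pos (Finset.mem_range.2 (by omega))]
      rw [hs1, hs2, add_zero]
  have hmain : Tendsto (fun N => ∮ z in C((0:ℂ), 1), z ^ m • P N z) atTop
      (𝓝 (∮ z in C((0:ℂ), 1), z ^ m • S z)) := by
    simp only [circleIntegral]
    apply intervalIntegral.tendsto_integral_filter_of_dominated_convergence
      (bound := fun _ => Ma * (1 - a)⁻¹ + Mb * (1 - b)⁻¹)
    · refine Eventually.of_forall fun N => Continuous.aestronglyMeasurable ?_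
      have hcm : Continuous (circleMap 0 1) := continuous_circleMap 0 1
      have hne : ∀ θ : ℝ, circleMap 0 1 θ ≠ 0 := fun θ => circleMap_ne_center one_ne_zero
      have hzp : ∀ k : ℤ, Continuous fun θ : ℝ => circleMap 0 1 θ ^ k := fun k =>
        hcm.zpow₀ k fun θ => Or.inl (hne θ)
      have hPc : Continuous fun θ : ℝ => P N (circleMap 0 1 θ) := by
        refine Continuous.add ?_ ?_
        · exact continuous_finset_sum _ fun n _ => ((hcm.pow n).smul continuous_const)
        · exact continuous_finset_sum _ fun n _ => ((hzp _).smul continuous_const)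
      have hd : Continuous fun θ : ℝ => deriv (circleMap 0 1) θ := by
        simp only [deriv_circleMap]
        exact hcm.mul continuous_const
      exact hd.smul ((hzp m).smul hPc)
    · refine Eventually.of_forall fun N => Eventually.of_forall fun θ _ => ?_
      have hz : ‖circleMap 0 1 θ‖ = 1 := by
        simp [norm_circleMap_zero]
      rw [norm_smul, norm_smul, deriv_circleMap]
      have h1 : ‖circleMap 0 1 θ * Complex.I‖ = 1 := by
        rw [norm_mul, hz, Complex.norm_I, one_mul]
      have h2 : ‖circleMap 0 1 θ ^ m‖ = 1 := by
        rw [norm_zpow, hz, one_zpow]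
      rw [h1, h2, one_mul, one_mul]
      calc ‖P N (circleMap 0 1 θ)‖
          ≤ (∑ n ∈ Finset.range N, ‖circleMap 0 1 θ ^ n • D n‖)
            + ∑ n ∈ Finset.range N, ‖circleMap 0 1 θ ^ (-(n:ℤ) - 1) • D (-(n:ℤ) - 1)‖ :=
            (norm_add_le _ _).trans (add_le_add (norm_sum_le _ _) (norm_sum_le _ _))
        _ ≤ (∑ n ∈ Finset.range N, Ma * a ^ n) + ∑ n ∈ Finset.range N, Mb * b ^ n := by
            refine add_le_add (Finset.sum_le_sum fun n _ => ?_)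
              (Finset.sum_le_sum fun n _ => ?_)
            · rw [norm_smul, norm_pow, hz, one_pow, one_mul]; exact hDp n
            · rw [norm_smul, norm_zpow, hz, one_zpow, one_mul]; exact hDm n
        _ ≤ Ma * (1 - a)⁻¹ + Mb * (1 - b)⁻¹ := by
            rw [← Finset.mul_sum, ← Finset.mul_sum]
            refine add_le_add (mul_le_mul_of_nonneg_left ?_ hMa)
              (mul_le_mul_of_nonneg_left ?_ hMb)
            · calc (∑ n ∈ Finset.range N, a ^ n) ≤ ∑' n : ℕ, a ^ n :=
                  Summable.sum_le_tsum _ (fun n _ => pow_nonneg ha0 n)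
                    (summable_geometric_of_lt_one ha0 ha)
                _ = (1 - a)⁻¹ := tsum_geometric_of_lt_one ha0 ha
            · calc (∑ n ∈ Finset.range N, b ^ n) ≤ ∑' n : ℕ, b ^ n :=
                  Summable.sum_le_tsum _ (fun n _ => pow_nonneg hb0 n)
                    (summable_geometric_of_lt_one hb0 hb)
                _ = (1 - b)⁻¹ := tsum_geometric_of_lt_one hb0 hb
    · exact intervalIntegrable_const
    · refine Eventually.of_forall fun θ _ => ?_
      have hz : ‖circleMap 0 1 θ‖ = 1 := by
        simp [norm_circleMap_zero]
      exact ((hconv _ hz).const_smul _).const_smul _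
  have hconst : Tendsto (fun N => ∮ z in C((0:ℂ), 1), z ^ m • P N z) atTop
      (𝓝 (c2 • D (-m - 1))) := by
    refine Tendsto.congr' ?_ tendsto_const_nhds
    filter_upwards [eventually_ge_atTop (m.natAbs + 1)] with N hN
    exact (step2 N hN).symm
  exact tendsto_nhds_unique hmain hconst

private lemma limsup_rpow_le {f : ℕ → ℝ} {M r : ℝ} (hM : 1 ≤ M) (hr : 0 < r)
    (hf0 : ∀ n, 0 ≤ f n) (hf : ∀ n : ℕ, 1 ≤ n → f n ≤ M * r ^ n) :
    Filter.limsup (fun n : ℕ => f n ^ ((1 : ℝ) / n)) atTop ≤ r := by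
  have hM0 : (0 : ℝ) < M := lt_of_lt_of_le one_pos hM
  have h1 : Tendsto (fun n : ℕ => ((1 : ℝ) / n)) atTop (𝓝 0) :=
    tendsto_one_div_atTop_nhds_zero_nat
  have h2 : Tendsto (fun n : ℕ => M ^ ((1 : ℝ) / n)) atTop (𝓝 1) := by
    have h3 : Tendsto (fun n : ℕ => Real.log M * ((1 : ℝ) / n)) atTop (𝓝 (Real.log M * 0)) :=
      h1.const_mul _
    rw [mul_zero] at h3
    have h4 := (Real.continuous_exp.tendsto 0).comp h3
    simp only [Function.comp_def, Real.exp_zero] at h4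
    refine h4.congr fun n => ?_
    rw [← Real.rpow_def_of_pos hM0]
  have hg : Tendsto (fun n : ℕ => M ^ ((1 : ℝ) / n) * r) atTop (𝓝 r) := by
    simpa using h2.mul_const r
  have hle : ∀ᶠ n : ℕ in atTop, f n ^ ((1 : ℝ) / n) ≤ M ^ ((1 : ℝ) / n) * r := by
    filter_upwards [eventually_ge_atTop 1] with n hn
    have hn0 : (0 : ℝ) < n := by exact_mod_cast hn
    calc f n ^ ((1 : ℝ) / n) ≤ (M * r ^ n) ^ ((1 : ℝ) / n) :=
          Real.rpow_le_rpow (hf0 n) (hf n hn) (by positivity)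
      _ = M ^ ((1 : ℝ) / n) * (r ^ n) ^ ((1 : ℝ) / n) :=
          Real.mul_rpow hM0.le (by positivity)
      _ = M ^ ((1 : ℝ) / n) * r := by
          rw [← Real.rpow_natCast r n, ← Real.rpow_mul hr.le]
          congr 1
          rw [mul_one_div, div_self hn0.ne']
          exact Real.rpow_one r
  calc Filter.limsup (fun n : ℕ => f n ^ ((1 : ℝ) / n)) atTop
      ≤ Filter.limsup (fun n : ℕ => M ^ ((1 : ℝ) / n) * r) atTop :=
        Filter.limsup_le_limsup hle
          (Filter.isCoboundedUnder_le_of_le atTop fun n => Real.rpow_nonneg (hf0 n) _)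
          hg.isBoundedUnder_le
    _ = r := hg.limsup_eq

set_option maxHeartbeats 1000000 in
/-- If `λI - T` is right invertible on the annulus `1 - ε < |λ| < 1 + ε` and `R` is a
holomorphic right inverse of `λI - T` there, with Laurent expansion
`R(λ) = Σ_{n∈ℤ} C_n λⁿ`, then `B = C₋₁` satisfies
`limsup ‖Tⁿ B‖^{1/n} ≤ 1 - ε < 1` and `limsup ‖T⁻ⁿ (I - B)‖^{1/n} ≤ 1/(1 + ε) < 1`. -/
theorem laurent_right_inverse_gives_splitting (T : (X →L[ℂ] X)ˣ) (ε : ℝ)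
    (hε : 0 < ε) (hε1 : ε < 1)
    (hrinv : ∀ l : ℂ, 1 - ε < ‖l‖ → ‖l‖ < 1 + ε →
      ∃ S : X →L[ℂ] X, (l • (1 : X →L[ℂ] X) - (T : X →L[ℂ] X)) * S = 1)
    (R : ℂ → (X →L[ℂ] X))
    (hol : DifferentiableOn ℂ R {l : ℂ | 1 - ε < ‖l‖ ∧ ‖l‖ < 1 + ε})
    (hR : ∀ l : ℂ, 1 - ε < ‖l‖ → ‖l‖ < 1 + ε →
      (l • (1 : X →L[ℂ] X) - (T : X →L[ℂ] X)) * R l = 1)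
    (C : ℤ → (X →L[ℂ] X))
    (hC : ∀ l : ℂ, 1 - ε < ‖l‖ → ‖l‖ < 1 + ε →
      ∃ Rp Rm : X →L[ℂ] X,
        Filter.Tendsto (fun N : ℕ => ∑ n ∈ Finset.range N, l ^ n • C n)
          Filter.atTop (nhds Rp) ∧
        Filter.Tendsto
          (fun N : ℕ => ∑ n ∈ Finset.range N, l ^ (-(n : ℤ) - 1) • C (-(n : ℤ) - 1))
          Filter.atTop (nhds Rm) ∧
        R l = Rp + Rm) :
    (Filter.limsup
        (fun n : ℕ => ‖(T : X →L[ℂ] X) ^ n * C (-1)‖ ^ ((1 : ℝ) / n))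
        Filter.atTop ≤ 1 - ε ∧ 1 - ε < 1) ∧
    (Filter.limsup
        (fun n : ℕ => ‖((T⁻¹ : (X →L[ℂ] X)ˣ) : X →L[ℂ] X) ^ n *
          (1 - C (-1))‖ ^ ((1 : ℝ) / n)) Filter.atTop ≤ 1 / (1 + ε) ∧
      1 / (1 + ε) < 1) := by
  have hnormr : ∀ r : ℝ, 0 < r → ‖(r : ℂ)‖ = r := fun r h0 => by
    rw [Complex.norm_real, Real.norm_eq_abs, abs_of_pos h0]
  -- coefficient bounds from convergence at real radii
  have coeffp : ∀ r : ℝ, 1 - ε < r → r < 1 + ε → 0 < r →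
      ∃ M, 0 ≤ M ∧ ∀ n : ℕ, ‖C n‖ ≤ M * (r⁻¹) ^ n := by
    intro r h1 h2 h0
    obtain ⟨Rp, Rm, hRp, hRm, hsum⟩ := hC (r : ℂ) (by rwa [hnormr r h0]) (by rwa [hnormr r h0])
    obtain ⟨M, hM0, hM⟩ := bdd_terms hRp
    refine ⟨M, hM0, fun n => ?_⟩
    have h := hM n
    rw [norm_smul, norm_pow, hnormr r h0] at h
    have h' : ‖C n‖ * r ^ n ≤ M := by rw [mul_comm]; exact h
    have h'' := (le_div_iff₀ (pow_pos h0 n)).2 h'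
    rwa [div_eq_mul_inv, ← inv_pow] at h''
  have coeffm : ∀ r : ℝ, 1 - ε < r → r < 1 + ε → 0 < r →
      ∃ M, 0 ≤ M ∧ ∀ n : ℕ, ‖C (-(n : ℤ) - 1)‖ ≤ M * r ^ (n + 1) := by
    intro r h1 h2 h0
    obtain ⟨Rp, Rm, hRp, hRm, hsum⟩ := hC (r : ℂ) (by rwa [hnormr r h0]) (by rwa [hnormr r h0])
    obtain ⟨M, hM0, hM⟩ := bdd_terms hRm
    refine ⟨M, hM0, fun n => ?_⟩
    have h := hM n
    rw [norm_smul, norm_zpow, hnormr r h0] at h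
    have hre : r ^ (-(n : ℤ) - 1) = (r ^ (n + 1))⁻¹ := by
      rw [show (-(n : ℤ) - 1) = -((n + 1 : ℕ) : ℤ) by push_cast; ring, zpow_neg, zpow_natCast]
    rw [hre] at h
    have h' := mul_le_mul_of_nonneg_left h (pow_nonneg h0.le (n + 1))
    rw [← mul_assoc, mul_inv_cancel₀ (pow_pos h0 (n + 1)).ne', one_mul] at h'
    rwa [mul_comm]
  -- fixed radii for the circle-integral computation
  obtain ⟨Mp, hMp0, hMp⟩ := coeffp (1 + ε / 2) (by linarith) (by linarith) (by linarith)
  obtain ⟨Mm, hMm0, hMm⟩ := coeffm (1 - ε / 2) (by linarith) (by linarith) (by linarith)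
  have ha0 : (0 : ℝ) ≤ (1 + ε / 2)⁻¹ := inv_nonneg.2 (by linarith)
  have ha : (1 + ε / 2)⁻¹ < 1 := inv_lt_one_of_one_lt₀ (by linarith)
  have hb0 : (0 : ℝ) ≤ 1 - ε / 2 := by linarith
  have hb : (1 : ℝ) - ε / 2 < 1 := by linarith
  have hCm : ∀ n : ℕ, ‖C (-(n : ℤ) - 1)‖ ≤ (Mm * (1 - ε / 2)) * (1 - ε / 2) ^ n := fun n => by
    calc ‖C (-(n : ℤ) - 1)‖ ≤ Mm * (1 - ε / 2) ^ (n + 1) := hMm n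
      _ = (Mm * (1 - ε / 2)) * (1 - ε / 2) ^ n := by ring
  have hconvR : ∀ z : ℂ, ‖z‖ = 1 →
      Tendsto (fun N : ℕ => (∑ n ∈ Finset.range N, z ^ n • C n)
        + ∑ n ∈ Finset.range N, z ^ (-(n : ℤ) - 1) • C (-(n : ℤ) - 1)) atTop (𝓝 (R z)) := by
    intro z hz
    obtain ⟨Rp, Rm, hRp, hRm, hsum⟩ := hC z (by rw [hz]; linarith) (by rw [hz]; linarith)
    rw [hsum]
    exact hRp.add hRm
  have keyR : ∀ m : ℤ, (∮ z in C((0:ℂ), 1), z ^ m • R z)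
      = (2 * Real.pi * Complex.I : ℂ) • C (-m - 1) :=
    fun m => circle_coeff ha0 ha hb0 hb hMp hCm hconvR m
  -- the function T * R
  have hTp : ∀ n : ℕ, ‖(T : X →L[ℂ] X) * C n‖
      ≤ (‖(T : X →L[ℂ] X)‖ * Mp) * ((1 + ε / 2)⁻¹) ^ n := fun n => by
    calc ‖(T : X →L[ℂ] X) * C n‖ ≤ ‖(T : X →L[ℂ] X)‖ * ‖C n‖ := norm_mul_le _ _
      _ ≤ ‖(T : X →L[ℂ] X)‖ * (Mp * ((1 + ε / 2)⁻¹) ^ n) :=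
          mul_le_mul_of_nonneg_left (hMp n) (norm_nonneg _)
      _ = (‖(T : X →L[ℂ] X)‖ * Mp) * ((1 + ε / 2)⁻¹) ^ n := by ring
  have hTm : ∀ n : ℕ, ‖(T : X →L[ℂ] X) * C (-(n : ℤ) - 1)‖
      ≤ (‖(T : X →L[ℂ] X)‖ * (Mm * (1 - ε / 2))) * (1 - ε / 2) ^ n := fun n => by
    calc ‖(T : X →L[ℂ] X) * C (-(n : ℤ) - 1)‖
        ≤ ‖(T : X →L[ℂ] X)‖ * ‖C (-(n : ℤ) - 1)‖ := norm_mul_le _ _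
      _ ≤ ‖(T : X →L[ℂ] X)‖ * ((Mm * (1 - ε / 2)) * (1 - ε / 2) ^ n) :=
          mul_le_mul_of_nonneg_left (hCm n) (norm_nonneg _)
      _ = (‖(T : X →L[ℂ] X)‖ * (Mm * (1 - ε / 2))) * (1 - ε / 2) ^ n := by ring
  have hconvTR : ∀ z : ℂ, ‖z‖ = 1 →
      Tendsto (fun N : ℕ => (∑ n ∈ Finset.range N, z ^ n • ((T : X →L[ℂ] X) * C n))
        + ∑ n ∈ Finset.range N, z ^ (-(n : ℤ) - 1) • ((T : X →L[ℂ] X) * C (-(n : ℤ) - 1)))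
        atTop (𝓝 ((T : X →L[ℂ] X) * R z)) := by
    intro z hz
    have h := Filter.Tendsto.const_mul (T : X →L[ℂ] X) (hconvR z hz)
    refine h.congr fun N => ?_
    rw [mul_add, Finset.mul_sum, Finset.mul_sum]
    congr 1 <;> exact Finset.sum_congr rfl fun n _ => mul_smul_comm _ _ _
  have keyTR : ∀ m : ℤ, (∮ z in C((0:ℂ), 1), z ^ m • ((T : X →L[ℂ] X) * R z))
      = (2 * Real.pi * Complex.I : ℂ) • ((T : X →L[ℂ] X) * C (-m - 1)) :=
    fun m => circle_coeff (D := fun k => (T : X →L[ℂ] X) * C k)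
      (S := fun z => (T : X →L[ℂ] X) * R z) ha0 ha hb0 hb hTp hTm hconvTR m
  -- recurrence via the resolvent identity
  have hsph : Metric.sphere (0 : ℂ) 1 ⊆ {l : ℂ | 1 - ε < ‖l‖ ∧ ‖l‖ < 1 + ε} := by
    intro z hz
    rw [mem_sphere_zero_iff_norm] at hz
    exact ⟨by rw [hz]; linarith, by rw [hz]; linarith⟩
  have hint2 : ∀ m : ℤ, CircleIntegrable
      (fun z : ℂ => z ^ m • ((T : X →L[ℂ] X) * R z)) 0 1 := by
    intro m
    refine ContinuousOn.circleIntegrable zero_le_one ?_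
    exact (zpow_contOn m).smul (continuousOn_const.mul (hol.continuousOn.mono hsph))
  have hrec : ∀ m : ℤ, (2 * Real.pi * Complex.I : ℂ) • C (-m - 2)
      = (if m = -1 then (2 * Real.pi * Complex.I : ℂ) else 0) • (1 : X →L[ℂ] X)
        + (2 * Real.pi * Complex.I : ℂ) • ((T : X →L[ℂ] X) * C (-m - 1)) := by
    intro m
    have e1 : (∮ z in C((0:ℂ), 1), z ^ (m + 1) • R z)
        = (2 * Real.pi * Complex.I : ℂ) • C (-m - 2) := by
      have h := keyR (m + 1)
      rwa [show -(m + 1) - 1 = -m - 2 by ring] at h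
    have e2 : (∮ z in C((0:ℂ), 1), z ^ (m + 1) • R z)
        = ∮ z in C((0:ℂ), 1),
            (z ^ m • (1 : X →L[ℂ] X) + z ^ m • ((T : X →L[ℂ] X) * R z)) := by
      refine circleIntegral.integral_congr zero_le_one fun z hz => ?_
      have hz1 : ‖z‖ = 1 := mem_sphere_zero_iff_norm.1 hz
      have hz0 : z ≠ 0 := fun h0 => by rw [h0] at hz1; simp at hz1
      have h := hR z (by rw [hz1]; linarith) (by rw [hz1]; linarith)
      rw [sub_mul, smul_mul_assoc, one_mul] at h
      have hid : z • R z = 1 + (T : X →L[ℂ] X) * R z := sub_eq_iff_eq_add.1 h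
      calc z ^ (m + 1) • R z = z ^ m • (z • R z) := by
            rw [smul_smul, ← zpow_add_one₀ hz0]
        _ = z ^ m • (1 : X →L[ℂ] X) + z ^ m • ((T : X →L[ℂ] X) * R z) := by
            rw [hid, smul_add]
    have e3 : (∮ z in C((0:ℂ), 1),
          (z ^ m • (1 : X →L[ℂ] X) + z ^ m • ((T : X →L[ℂ] X) * R z)))
        = (if m = -1 then (2 * Real.pi * Complex.I : ℂ) else 0) • (1 : X →L[ℂ] X)
          + (2 * Real.pi * Complex.I : ℂ) • ((T : X →L[ℂ] X) * C (-m - 1)) := by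
      rw [circleIntegral_add' (circleIntegrable_zpow_smul m (1 : X →L[ℂ] X)) (hint2 m),
        circleIntegral.integral_smul_const, circle_zpow, keyTR m]
    rw [← e1, e2, e3]
  have rec2 : ∀ k : ℤ, C (k - 1)
      = (if k = 0 then (1 : X →L[ℂ] X) else 0) + (T : X →L[ℂ] X) * C k := by
    intro k
    have h := hrec (-k - 1)
    rw [show (-(-k - 1) - 2 : ℤ) = k - 1 by ring, show (-(-k - 1) - 1 : ℤ) = k by ring] at h
    rw [if_congr (show ((-k - 1 : ℤ) = -1) ↔ (k = 0) by omega) rfl rfl] at h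
    have hsw : ((if k = 0 then (2 * Real.pi * Complex.I : ℂ) else 0) • (1 : X →L[ℂ] X))
        = (2 * Real.pi * Complex.I : ℂ) • (if k = 0 then (1 : X →L[ℂ] X) else 0) := by
      split_ifs <;> simp
    rw [hsw, ← smul_add] at h
    exact smul_right_injective _ Complex.two_pi_I_ne_zero h
  -- iterated identities
  have hTn : ∀ n : ℕ, (T : X →L[ℂ] X) ^ n * C (-1) = C (-(n : ℤ) - 1) := by
    intro n
    induction n with
    | zero => norm_num
    | succ n ih =>
      have h := rec2 (-(n : ℤ) - 1)
      rw [if_neg (by omega), zero_add] at h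
      calc (T : X →L[ℂ] X) ^ (n + 1) * C (-1)
          = (T : X →L[ℂ] X) * ((T : X →L[ℂ] X) ^ n * C (-1)) := by
            rw [pow_succ', mul_assoc]
        _ = (T : X →L[ℂ] X) * C (-(n : ℤ) - 1) := by rw [ih]
        _ = C (-((n : ℕ) + 1 : ℤ) - 1) := by rw [← h]; congr 1; push_cast; ring
  have hf1 : (1 : X →L[ℂ] X) - C (-1) = -((T : X →L[ℂ] X) * C 0) := by
    have h := rec2 0
    rw [if_pos rfl, show ((0 : ℤ) - 1) = -1 by ring] at h
    rw [h]
    abel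
  have hTin : ∀ n : ℕ, ((T⁻¹ : (X →L[ℂ] X)ˣ) : X →L[ℂ] X) ^ (n + 1)
      * ((1 : X →L[ℂ] X) - C (-1)) = -C (n : ℤ) := by
    intro n
    induction n with
    | zero =>
      rw [pow_one, hf1, mul_neg, ← mul_assoc, Units.inv_mul, one_mul]
      norm_num
    | succ n ih =>
      have h := rec2 ((n : ℤ) + 1)
      rw [if_neg (by omega), zero_add, show ((n : ℤ) + 1 - 1) = (n : ℤ) by ring] at h
      calc ((T⁻¹ : (X →L[ℂ] X)ˣ) : X →L[ℂ] X) ^ (n + 1 + 1) * ((1 : X →L[ℂ] X) - C (-1))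
          = ((T⁻¹ : (X →L[ℂ] X)ˣ) : X →L[ℂ] X)
            * (((T⁻¹ : (X →L[ℂ] X)ˣ) : X →L[ℂ] X) ^ (n + 1)
              * ((1 : X →L[ℂ] X) - C (-1))) := by rw [pow_succ', mul_assoc]
        _ = ((T⁻¹ : (X →L[ℂ] X)ˣ) : X →L[ℂ] X) * (-C (n : ℤ)) := by rw [ih]
        _ = -C ((n : ℕ) + 1 : ℤ) := by
            rw [h, mul_neg, ← mul_assoc, Units.inv_mul, one_mul]
  -- conclusion
  refine ⟨⟨?_, by linarith⟩, ?_, ?_⟩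
  · -- first limsup
    refine le_of_forall_gt_imp_ge_of_dense fun c hc => ?_
    have hr1 : 1 - ε < min c 1 := lt_min hc (by linarith)
    have hr2 : min c 1 < 1 + ε := lt_of_le_of_lt (min_le_right _ _) (by linarith)
    have hr0 : (0 : ℝ) < min c 1 := lt_trans (by linarith) hr1
    obtain ⟨M, hM0, hM⟩ := coeffm (min c 1) hr1 hr2 hr0
    have hls : Filter.limsup
        (fun n : ℕ => ‖(T : X →L[ℂ] X) ^ n * C (-1)‖ ^ ((1 : ℝ) / n)) Filter.atTop
        ≤ min c 1 := by
      refine limsup_rpow_le (M := max (M * min c 1) 1) (le_max_right _ _) hr0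
        (fun n => norm_nonneg _) fun n hn => ?_
      calc ‖(T : X →L[ℂ] X) ^ n * C (-1)‖ = ‖C (-(n : ℤ) - 1)‖ := by rw [hTn n]
        _ ≤ M * (min c 1) ^ (n + 1) := hM n
        _ = (M * min c 1) * (min c 1) ^ n := by ring
        _ ≤ max (M * min c 1) 1 * (min c 1) ^ n :=
            mul_le_mul_of_nonneg_right (le_max_left _ _) (pow_nonneg hr0.le n)
    exact hls.trans (min_le_left c 1)
  · -- second limsup
    refine le_of_forall_gt_imp_ge_of_dense fun c hc => ?_
    have hc0 : (0 : ℝ) < c := lt_trans (by positivity) hc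
    have hcinv : c⁻¹ < 1 + ε := by
      have h1 : (1 + ε)⁻¹ < c := by rwa [← one_div]
      have h2 : c⁻¹ < ((1 + ε)⁻¹)⁻¹ := by
        exact inv_strictAnti₀ (by positivity) h1
      rwa [inv_inv] at h2
    have hr1 : 1 - ε < max c⁻¹ 1 := lt_of_lt_of_le (by linarith) (le_max_right _ _)
    have hr2 : max c⁻¹ 1 < 1 + ε := max_lt hcinv (by linarith)
    have hr0 : (0 : ℝ) < max c⁻¹ 1 := lt_of_lt_of_le one_pos (le_max_right _ _)
    have hrc : (max c⁻¹ 1)⁻¹ ≤ c := by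
      rcases max_cases c⁻¹ 1 with ⟨he, h1⟩ | ⟨he, h1⟩
      · rw [he, inv_inv]
      · rw [he, inv_one]
        nlinarith [mul_inv_cancel₀ hc0.ne']
    obtain ⟨M, hM0, hM⟩ := coeffp (max c⁻¹ 1) hr1 hr2 hr0
    have hls : Filter.limsup
        (fun n : ℕ => ‖((T⁻¹ : (X →L[ℂ] X)ˣ) : X →L[ℂ] X) ^ n
          * (1 - C (-1))‖ ^ ((1 : ℝ) / n)) Filter.atTop ≤ (max c⁻¹ 1)⁻¹ := by
      refine limsup_rpow_le (M := max (M * max c⁻¹ 1) 1) (le_max_right _ _)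
        (inv_pos.2 hr0) (fun n => norm_nonneg _) fun n hn => ?_
      obtain ⟨k, rfl⟩ : ∃ k, n = k + 1 := ⟨n - 1, by omega⟩
      calc ‖((T⁻¹ : (X →L[ℂ] X)ˣ) : X →L[ℂ] X) ^ (k + 1) * (1 - C (-1))‖
          = ‖C (k : ℤ)‖ := by rw [hTin k, norm_neg]
        _ ≤ M * ((max c⁻¹ 1)⁻¹) ^ k := hM k
        _ = (M * max c⁻¹ 1) * ((max c⁻¹ 1)⁻¹) ^ (k + 1) := by
            rw [pow_succ]
            field_simp
        _ ≤ max (M * max c⁻¹ 1) 1 * ((max c⁻¹ 1)⁻¹) ^ (k + 1) :=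
            mul_le_mul_of_nonneg_right (le_max_left _ _)
              (pow_nonneg (inv_nonneg.2 hr0.le) _)
    exact hls.trans hrc
  · rw [div_lt_one (by linarith)]
    linarith
end
end
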